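/- arXiv:2004.09326 — 3 statements merged into one kernel-verified Lean document; each statement's English description precedes it below -/
import Mathlib

section
/- Let F be the free group with free basis x₁,…,x_k. Then every generating n-tuple of F satisfies n ≥ k and is Nielsen equivalent to the tuple (x₁,…,x_k, 1,…,1) consisting of the basis followed by n − k copies of the identity. In particular, any two generating n-tuples of F are Nielsen equivalent. -/
/-- An elementary Nielsen transformation on an `n`-tuple of elements of a group:
(T1) invert an entry, (T2) swap two distinct entries, (T3) replace an entry by its
product with another (distinct) entry. -/
inductive NielsenStep {G : Type*} [Group G] {n : ℕ} : (Fin n → G) → (Fin n → G) → Prop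
  | inv (T : Fin n → G) (i : Fin n) : NielsenStep T (Function.update T i (T i)⁻¹)
  | swap (T : Fin n → G) (i j : Fin n) (hij : i ≠ j) : NielsenStep T (T ∘ Equiv.swap i j)
  | mul (T : Fin n → G) (i j : Fin n) (hij : i ≠ j) :
      NielsenStep T (Function.update T i (T i * T j))

/-- Two `n`-tuples of elements of a group are Nielsen equivalent if a finite chain of
elementary Nielsen transformations carries one to the other. -/
def NielsenEquiv {G : Type*} [Group G] {n : ℕ} (T T' : Fin n → G) : Prop :=
  Relation.ReflTransGen NielsenStep T T'

set_option linter.unusedSectionVars false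
set_option maxHeartbeats 1000000

namespace NielsenProof

open Function

variable {G : Type*} [Group G] {n : ℕ} {T : Fin n → G}

theorem NE.refl (T : Fin n → G) : NielsenEquiv T T := Relation.ReflTransGen.refl

theorem NE.trans {T₁ T₂ T₃ : Fin n → G} (h : NielsenEquiv T₁ T₂) (h' : NielsenEquiv T₂ T₃) :
    NielsenEquiv T₁ T₃ := Relation.ReflTransGen.trans h h'

theorem NE.single {T T' : Fin n → G} (h : NielsenStep T T') : NielsenEquiv T T' :=
  Relation.ReflTransGen.single h

theorem NE.congr {T T' : Fin n → G} (h : NielsenEquiv T T') {T''} (e : T' = T'') :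
    NielsenEquiv T T'' := e ▸ h

theorem ne_inv (T : Fin n → G) (i : Fin n) : NielsenEquiv T (update T i (T i)⁻¹) :=
  NE.single (.inv T i)

theorem ne_mul (T : Fin n → G) (i j : Fin n) (hij : i ≠ j) :
    NielsenEquiv T (update T i (T i * T j)) := NE.single (.mul T i j hij)

theorem ne_swap (T : Fin n → G) (i j : Fin n) (hij : i ≠ j) :
    NielsenEquiv T (T ∘ Equiv.swap i j) := NE.single (.swap T i j hij)

theorem ne_mulInv (T : Fin n → G) (i j : Fin n) (hij : i ≠ j) :
    NielsenEquiv T (update T i (T i * (T j)⁻¹)) := by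
  have h1 := ne_inv T j
  have h2 := ne_mul (update T j (T j)⁻¹) i j hij
  have h3 := ne_inv (update (update T j (T j)⁻¹) i
    ((update T j (T j)⁻¹) i * (update T j (T j)⁻¹) j)) j
  refine NE.congr ((h1.trans h2).trans h3) ?_
  funext x
  simp only [Function.update_apply]
  split_ifs <;> simp_all

theorem ne_leftMul (T : Fin n → G) (i j : Fin n) (hij : i ≠ j) (g : G)
    (hg : g = T j ∨ g = (T j)⁻¹) :
    NielsenEquiv T (update T i (g * T i)) := by
  have h1 := ne_inv T i
  have eAj : (update T i (T i)⁻¹) j = T j := update_of_ne (Ne.symm hij) _ _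
  have h2 : NielsenEquiv (update T i (T i)⁻¹)
      (update (update T i (T i)⁻¹) i ((update T i (T i)⁻¹) i * g⁻¹)) := by
    rcases hg with rfl | rfl
    · rw [← eAj]; exact ne_mulInv _ i j hij
    · rw [inv_inv, ← eAj]; exact ne_mul _ i j hij
  have h3 := ne_inv (update (update T i (T i)⁻¹) i ((update T i (T i)⁻¹) i * g⁻¹)) i
  refine NE.congr ((h1.trans h2).trans h3) ?_
  funext x
  simp only [Function.update_apply]
  split_ifs <;> simp_all [mul_inv_rev]

theorem ne_rightMul (T : Fin n → G) (i j : Fin n) (hij : i ≠ j) (g : G)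
    (hg : g = T j ∨ g = (T j)⁻¹) :
    NielsenEquiv T (update T i (T i * g)) := by
  rcases hg with rfl | rfl
  · exact ne_mul T i j hij
  · exact ne_mulInv T i j hij

/-- Replace entry `i` (interpreted with sign `e`) by `((T i)^e * g)^e`, where `g = (T j)^±`. -/
theorem ne_replace (T : Fin n → G) (i j : Fin n) (hij : i ≠ j) (e : Bool) (g : G)
    (hg : g = T j ∨ g = (T j)⁻¹) :
    NielsenEquiv T (update T i (cond e ((cond e (T i) (T i)⁻¹) * g)
      (((cond e (T i) (T i)⁻¹) * g)⁻¹))) := by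
  cases e
  · simpa [mul_inv_rev] using
      ne_leftMul T i j hij g⁻¹ (by rcases hg with rfl | rfl <;> simp)
  · simpa using ne_rightMul T i j hij g hg

theorem ne_perm (σ : Equiv.Perm (Fin n)) : ∀ T : Fin n → G, NielsenEquiv T (T ∘ σ) := by
  refine Equiv.Perm.swap_induction_on σ (fun T => by simpa using NE.refl T) ?_
  intro σ x y hxy ih T
  have h1 := ne_swap T x y hxy
  have h2 := ih (T ∘ Equiv.swap x y)
  refine h1.trans (NE.congr h2 ?_)
  funext t; simp [Equiv.Perm.mul_apply]

theorem step_symm {T T' : Fin n → G} (h : NielsenStep T T') : NielsenEquiv T' T := by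
  cases h with
  | inv i =>
    refine NE.congr (ne_inv (update T i (T i)⁻¹) i) ?_
    funext x
    simp only [Function.update_apply]
    split_ifs <;> simp_all
  | swap i j hij =>
    refine NE.congr (ne_swap (T ∘ Equiv.swap i j) i j hij) ?_
    funext x; simp
  | mul i j hij =>
    refine NE.congr (ne_mulInv (update T i (T i * T j)) i j hij) ?_
    funext x
    simp only [Function.update_apply]
    split_ifs <;> simp_all

theorem NE.symm {T T' : Fin n → G} (h : NielsenEquiv T T') : NielsenEquiv T' T := by
  induction h with
  | refl => exact NE.refl _
  | tail _ hstep ih => exact (step_symm hstep).trans ih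

open Subgroup in
theorem closure_range_update_eq (i : Fin n) (g : G)
    (hg : g ∈ closure (Set.range T)) (hback : T i ∈ closure (Set.range (update T i g))) :
    closure (Set.range (update T i g)) = closure (Set.range T) := by
  apply le_antisymm
  · rw [closure_le]
    rintro x ⟨m, rfl⟩
    rcases eq_or_ne m i with rfl | hmi
    · rw [update_self]; exact hg
    · rw [update_of_ne hmi]; exact subset_closure ⟨m, rfl⟩
  · rw [closure_le]
    rintro x ⟨m, rfl⟩
    rcases eq_or_ne m i with rfl | hmi
    · exact hback
    · have : T m = update T i g m := (update_of_ne hmi _ _).symm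
      rw [this]; exact subset_closure ⟨m, rfl⟩

open Subgroup in
theorem step_closure {T T' : Fin n → G} (h : NielsenStep T T') :
    closure (Set.range T') = closure (Set.range T) := by
  cases h with
  | inv i =>
    apply closure_range_update_eq
    · exact inv_mem (subset_closure ⟨i, rfl⟩)
    · have hmem : (update T i (T i)⁻¹) i ∈ closure (Set.range (update T i (T i)⁻¹)) :=
        subset_closure ⟨i, rfl⟩
      simpa using inv_mem hmem
  | swap i j hij =>
    have : Set.range (T ∘ Equiv.swap i j) = Set.range T :=
      (Equiv.swap i j).surjective.range_comp T
    rw [this]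
  | mul i j hij =>
    apply closure_range_update_eq
    · exact mul_mem (subset_closure ⟨i, rfl⟩) (subset_closure ⟨j, rfl⟩)
    · have h1 : (update T i (T i * T j)) i ∈ closure (Set.range (update T i (T i * T j))) :=
        subset_closure ⟨i, rfl⟩
      have h2 : (update T i (T i * T j)) j ∈ closure (Set.range (update T i (T i * T j))) :=
        subset_closure ⟨j, rfl⟩
      simpa [update_of_ne (Ne.symm hij)] using mul_mem h1 (inv_mem h2)

open Subgroup in
theorem NE.closure_eq {T T' : Fin n → G} (h : NielsenEquiv T T') :
    closure (Set.range T') = closure (Set.range T) := by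
  induction h with
  | refl => rfl
  | tail _ hstep ih => rw [step_closure hstep, ih]




open FreeGroup List

variable {α : Type*} [DecidableEq α]

/-- A word is reduced: no adjacent cancelling pair. -/
def Reduced (L : List (α × Bool)) : Prop :=
  List.Chain' (fun p q => ¬(p.1 = q.1 ∧ q.2 = !p.2)) L

theorem reduce_cons_nil {L : List (α × Bool)} {x : α × Bool} (h : FreeGroup.reduce L = []) :
    FreeGroup.reduce (x :: L) = [x] := by rw [FreeGroup.reduce.cons, h]

theorem reduce_cons_of {L t : List (α × Bool)} {x y : α × Bool}
    (h : FreeGroup.reduce L = y :: t) :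
    FreeGroup.reduce (x :: L) = if x.1 = y.1 ∧ x.2 = !y.2 then t else x :: y :: t := by
  rw [FreeGroup.reduce.cons, h]

theorem reduced_of_reduce_eq {L : List (α × Bool)} (h : FreeGroup.reduce L = L) : Reduced L := by
  induction L with
  | nil => exact List.isChain_nil
  | cons x L ih =>
    rcases hL : FreeGroup.reduce L with _ | ⟨y, t⟩
    · have h2 : x :: L = [x] := by rw [← h, reduce_cons_nil hL]
      cases h2; simp [Reduced, List.Chain']
    · by_cases hc : x.1 = y.1 ∧ x.2 = !y.2
      · exfalso
        have h2 := h
        rw [reduce_cons_of hL, if_pos hc] at h2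
        have hlen := congrArg List.length h2
        have hle := (FreeGroup.reduce.red (L := L)).length_le
        rw [hL] at hle
        simp at hlen hle; omega
      · have h2 := h
        rw [reduce_cons_of hL, if_neg hc] at h2
        have hL' : L = y :: t := by cases h2; rfl
        have hred : FreeGroup.reduce L = L := by rw [hL, hL']
        have hRed := ih hred
        rw [hL']
        refine List.isChain_cons_cons.mpr ⟨?_, by rwa [hL'] at hRed⟩
        intro ⟨h1, hb⟩
        exact hc ⟨h1, by cases x.2 <;> cases y.2 <;> simp_all⟩

theorem reduce_eq_of_reduced {L : List (α × Bool)} (h : Reduced L) : FreeGroup.reduce L = L := by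
  induction L with
  | nil => rfl
  | cons x L ih =>
    have hL := ih (List.isChain_cons.mp h).2
    cases L with
    | nil => rfl
    | cons y t =>
      have hx := (List.isChain_cons_cons.mp h).1
      rw [reduce_cons_of hL, if_neg]
      intro ⟨h1, h2⟩
      exact hx ⟨h1, by cases x.2 <;> cases y.2 <;> simp_all⟩

theorem reduced_iff {L : List (α × Bool)} : FreeGroup.reduce L = L ↔ Reduced L :=
  ⟨reduced_of_reduce_eq, reduce_eq_of_reduced⟩

theorem reduced_toWord (x : FreeGroup α) : Reduced x.toWord :=
  reduced_of_reduce_eq (FreeGroup.reduce_toWord x)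

theorem Reduced.infix {L L' : List (α × Bool)} (h : Reduced L) (h' : L' <:+: L) : Reduced L' :=
  List.IsChain.infix h h'

theorem invRev_append' (L L' : List (α × Bool)) :
    FreeGroup.invRev (L ++ L') = FreeGroup.invRev L' ++ FreeGroup.invRev L := by
  simp [FreeGroup.invRev]

theorem invRev_singleton (z : α × Bool) :
    FreeGroup.invRev [z] = [(z.1, !z.2)] := by simp [FreeGroup.invRev]

theorem mk_pair_cancel (z : α × Bool) :
    FreeGroup.mk [z, (z.1, !z.2)] = 1 := by
  have : FreeGroup.mk ([] ++ (z.1, z.2) :: (z.1, !z.2) :: []) = FreeGroup.mk ([] ++ []) :=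
    Quot.sound (FreeGroup.Red.Step.not)
  simpa [← FreeGroup.one_eq_mk] using this

/-- Cancellation structure of a product of two reduced words. -/
theorem exists_decomp :
    ∀ (L₁ L₂ : List (α × Bool)), Reduced L₁ → Reduced L₂ →
      ∃ A C B, L₁ = A ++ C ∧ L₂ = FreeGroup.invRev C ++ B ∧
        FreeGroup.reduce (L₁ ++ L₂) = A ++ B := by
  intro L₁
  induction L₁ using List.reverseRecOn with
  | nil =>
    intro L₂ _ h₂
    exact ⟨[], [], L₂, by simp, by simp [FreeGroup.invRev],
      by simpa using reduce_eq_of_reduced h₂⟩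
  | append_singleton M z ih =>
    intro L₂ h₁ h₂
    have hM : Reduced M := h₁.infix ⟨[], [z], by simp⟩
    cases L₂ with
    | nil =>
      exact ⟨M ++ [z], [], [], by simp, by simp [FreeGroup.invRev],
        by simpa using reduce_eq_of_reduced h₁⟩
    | cons y L₂' =>
      by_cases hy : y = (z.1, !z.2)
      · have hL₂' : Reduced L₂' := h₂.infix ⟨[y], [], by simp⟩
        obtain ⟨A, C₀, B, e1, e2, e3⟩ := ih L₂' hM hL₂'
        refine ⟨A, C₀ ++ [z], B, by rw [e1, List.append_assoc], ?_, ?_⟩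
        · rw [invRev_append', invRev_singleton, ← hy, e2]; simp
        · have hmk : FreeGroup.mk ((M ++ [z]) ++ y :: L₂') = FreeGroup.mk (M ++ L₂') := by
            have heq : (M ++ [z]) ++ y :: L₂' = M ++ ([z, (z.1, !z.2)] ++ L₂') := by
              rw [hy]; simp
            rw [heq, ← FreeGroup.mul_mk, ← FreeGroup.mul_mk (L₁ := [z, (z.1, !z.2)]),
              mk_pair_cancel, one_mul, FreeGroup.mul_mk]
          rw [FreeGroup.reduce.sound hmk, e3]
      · refine ⟨M ++ [z], [], y :: L₂', by simp, by simp [FreeGroup.invRev], ?_⟩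
        apply reduce_eq_of_reduced
        simp only [Reduced, List.Chain']
        rw [List.isChain_append]
        refine ⟨h₁, h₂, ?_⟩
        intro a ha b hb hcon
        rw [List.getLast?_concat] at ha
        rw [List.head?_cons] at hb
        obtain rfl : z = a := Option.some.inj ha
        obtain rfl : y = b := Option.some.inj hb
        exact hy (Prod.ext hcon.1.symm hcon.2)


/-! ### Group-level corollaries of the cancellation lemma -/

theorem toWord_mul' (x y : FreeGroup α) :
    (x * y).toWord = FreeGroup.reduce (x.toWord ++ y.toWord) := by
  have h : x * y = FreeGroup.mk (x.toWord ++ y.toWord) := by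
    rw [← FreeGroup.mul_mk, FreeGroup.mk_toWord, FreeGroup.mk_toWord]
  rw [h, FreeGroup.toWord_mk]

theorem mul_decomp (x y : FreeGroup α) :
    ∃ A C B, x.toWord = A ++ C ∧ y.toWord = FreeGroup.invRev C ++ B ∧
      (x * y).toWord = A ++ B := by
  obtain ⟨A, C, B, h1, h2, h3⟩ :=
    exists_decomp x.toWord y.toWord (reduced_toWord x) (reduced_toWord y)
  exact ⟨A, C, B, h1, h2, by rw [toWord_mul', h3]⟩

theorem mk_mul_mk_cancel (D s E : List (α × Bool)) :
    FreeGroup.mk (D ++ s) * FreeGroup.mk (FreeGroup.invRev s ++ E) = FreeGroup.mk (D ++ E) := by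
  calc FreeGroup.mk (D ++ s) * FreeGroup.mk (FreeGroup.invRev s ++ E)
      = (FreeGroup.mk D * FreeGroup.mk s) * ((FreeGroup.mk s)⁻¹ * FreeGroup.mk E) := by
        rw [← FreeGroup.mul_mk, ← FreeGroup.mul_mk, FreeGroup.inv_mk]
    _ = FreeGroup.mk D * FreeGroup.mk E := by group
    _ = FreeGroup.mk (D ++ E) := FreeGroup.mul_mk

theorem norm_toWord (x : FreeGroup α) : FreeGroup.norm x = x.toWord.length := rfl

theorem norm_mk_reduced {L : List (α × Bool)} (h : Reduced L) :
    FreeGroup.norm (FreeGroup.mk L) = L.length := by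
  rw [norm_toWord, FreeGroup.toWord_mk, reduce_eq_of_reduced h]

theorem norm_mul_le_parts {x y : FreeGroup α} {D s E : List (α × Bool)}
    (hx : x = FreeGroup.mk (D ++ s)) (hy : y = FreeGroup.mk (FreeGroup.invRev s ++ E)) :
    FreeGroup.norm (x * y) ≤ D.length + E.length := by
  rw [hx, hy, mk_mul_mk_cancel]
  exact le_trans FreeGroup.norm_mk_le (by simp)

theorem eq_mk_of_suffix {x : FreeGroup α} {s : List (α × Bool)} (h : s <:+ x.toWord) :
    ∃ D, x.toWord = D ++ s ∧ x = FreeGroup.mk (D ++ s) := by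
  obtain ⟨D, hD⟩ := h
  exact ⟨D, hD.symm, by rw [hD, FreeGroup.mk_toWord]⟩

/-! ### Numeric encoding of words over `Fin k × Bool` -/

def dig {k : ℕ} (p : Fin k × Bool) : ℕ := 2 * p.1.1 + (cond p.2 0 1)

theorem dig_lt {k : ℕ} (p : Fin k × Bool) : dig p < 2 * k := by
  rcases p with ⟨⟨i, hi⟩, b⟩; cases b <;> simp [dig] <;> omega

theorem dig_inj {k : ℕ} {p q : Fin k × Bool} (h : dig p = dig q) : p = q := by
  rcases p with ⟨⟨i, hi⟩, b⟩; rcases q with ⟨⟨j, hj⟩, c⟩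
  cases b <;> cases c <;> simp [dig] at h ⊢ <;> first | omega | (exact Fin.ext (by omega))

def enc {k : ℕ} : List (Fin k × Bool) → ℕ
  | [] => 0
  | x :: t => (dig x + 1) * (2 * k + 1) ^ t.length + enc t

theorem enc_lt {k : ℕ} (L : List (Fin k × Bool)) : enc L < (2 * k + 1) ^ L.length := by
  induction L with
  | nil => simp [enc]
  | cons x t ih =>
    have h1 : dig x + 1 ≤ 2 * k := by have := dig_lt x; omega
    have h2 : (0:ℕ) < (2 * k + 1) ^ t.length := Nat.pow_pos (by omega)
    calc (dig x + 1) * (2 * k + 1) ^ t.length + enc t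
        < (dig x + 1) * (2 * k + 1) ^ t.length + (2 * k + 1) ^ t.length := by omega
      _ = (dig x + 2) * (2 * k + 1) ^ t.length := by ring
      _ ≤ (2 * k + 1) * (2 * k + 1) ^ t.length := by
          exact Nat.mul_le_mul_right _ (by omega)
      _ = (2 * k + 1) ^ (t.length + 1) := by ring
      _ = (2 * k + 1) ^ (x :: t).length := by simp

theorem enc_append {k : ℕ} (X Y : List (Fin k × Bool)) :
    enc (X ++ Y) = enc X * (2 * k + 1) ^ Y.length + enc Y := by
  induction X with
  | nil => simp [enc]
  | cons x t ih =>
    show (dig x + 1) * (2 * k + 1) ^ (t ++ Y).length + enc (t ++ Y) = _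
    rw [ih, List.length_append, pow_add]
    simp only [enc]
    ring

theorem mul_pow_add_inj {a b r s Q : ℕ} (hQ : 0 < Q) (hr : r < Q) (hs : s < Q)
    (h : a * Q + r = b * Q + s) : a = b ∧ r = s := by
  have hab : a = b := by
    by_contra hne
    rcases Nat.lt_or_ge a b with hlt | hge
    · have h2 : (a + 1) * Q ≤ b * Q := Nat.mul_le_mul_right _ hlt
      nlinarith
    · have hlt : b < a := lt_of_le_of_ne hge (Ne.symm hne)
      have h2 : (b + 1) * Q ≤ a * Q := Nat.mul_le_mul_right _ hlt
      nlinarith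
  exact ⟨hab, by subst hab; omega⟩

theorem enc_inj {k : ℕ} : ∀ {X Y : List (Fin k × Bool)}, X.length = Y.length →
    enc X = enc Y → X = Y := by
  intro X
  induction X with
  | nil => intro Y h _; exact (List.length_eq_zero_iff.mp h.symm).symm ▸ rfl
  | cons x t ih =>
    intro Y hlen henc
    cases Y with
    | nil => simp at hlen
    | cons y u =>
      have hl : t.length = u.length := by simpa using hlen
      rw [enc, enc, hl] at henc
      obtain ⟨h1, h2⟩ := mul_pow_add_inj (Nat.pow_pos (by omega))
        (hl ▸ enc_lt t) (enc_lt u) henc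
      have : x = y := dig_inj (by omega)
      rw [this, ih hl h2]

theorem enc_lt_of_blocks {k : ℕ} {X Y R S : List (Fin k × Bool)}
    (hXY : X.length = Y.length) (hRS : R.length = S.length)
    (h : enc X < enc Y) : enc (X ++ R) < enc (Y ++ S) := by
  rw [enc_append, enc_append, hRS]
  have h1 : enc R < (2 * k + 1) ^ S.length := hRS ▸ enc_lt R
  have h2 : enc X + 1 ≤ enc Y := h
  calc enc X * (2 * k + 1) ^ S.length + enc R
      < (enc X + 1) * (2 * k + 1) ^ S.length := by
        have : (0:ℕ) < (2 * k + 1) ^ S.length := Nat.pow_pos (by omega)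
        nlinarith
    _ ≤ enc Y * (2 * k + 1) ^ S.length := Nat.mul_le_mul_right _ h2
    _ ≤ enc Y * (2 * k + 1) ^ S.length + enc S := Nat.le_add_right _ _

/-! ### The secondary measure -/

def pm {k : ℕ} (x : FreeGroup (Fin k)) : ℕ :=
  enc (x.toWord.take ((FreeGroup.norm x + 1) / 2)) +
    enc ((x⁻¹).toWord.take ((FreeGroup.norm x + 1) / 2))

theorem pm_inv {k : ℕ} (x : FreeGroup (Fin k)) : pm x⁻¹ = pm x := by
  unfold pm
  rw [inv_inv, FreeGroup.norm_inv_eq]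
  omega

def weight {k n : ℕ} (T : Fin n → FreeGroup (Fin k)) : ℕ := ∑ i, FreeGroup.norm (T i)

def mu2 {k n : ℕ} (T : Fin n → FreeGroup (Fin k)) : ℕ := ∑ i, pm (T i)

def MLt {k n : ℕ} (T' T : Fin n → FreeGroup (Fin k)) : Prop :=
  weight T' < weight T ∨ (weight T' = weight T ∧ mu2 T' < mu2 T)

theorem mlt_wf {k n : ℕ} : WellFounded (@MLt k n) := by
  have h : WellFounded (Prod.Lex (· < ·) (· < ·) : ℕ × ℕ → ℕ × ℕ → Prop) :=
    WellFounded.prod_lex (Nat.lt_wfRel.wf) (Nat.lt_wfRel.wf)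
  have h2 := InvImage.wf (fun T : Fin n → FreeGroup (Fin k) => (weight T, mu2 T)) h
  apply Subrelation.wf (r := InvImage (Prod.Lex (· < ·) (· < ·))
    (fun T : Fin n → FreeGroup (Fin k) => (weight T, mu2 T))) ?_ h2
  intro T' T hT
  rcases hT with h1 | ⟨h1, h2'⟩
  · exact Prod.Lex.left _ _ h1
  · show Prod.Lex _ _ (weight T', mu2 T') (weight T, mu2 T)
    rw [h1]
    exact Prod.Lex.right _ h2'

/-- Sum over update: comparing weights entrywise. -/
theorem sum_update_lt {n : ℕ} (f : Fin n → ℕ) (i : Fin n) (v : ℕ) (h : v < f i) :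
    ∑ j, Function.update f i v j < ∑ j, f j := by
  rw [Finset.sum_update_of_mem (Finset.mem_univ i)]
  rw [show ∑ j, f j = f i + ∑ j ∈ Finset.univ \ {i}, f j from
    (Finset.sum_eq_add_sum_sdiff_singleton_of_mem (Finset.mem_univ i) f)]
  omega

theorem sum_update_eq_of_eq {n : ℕ} (f : Fin n → ℕ) (i : Fin n) (v : ℕ) (h : v = f i) :
    ∑ j, Function.update f i v j = ∑ j, f j := by
  rw [Finset.sum_update_of_mem (Finset.mem_univ i)]
  rw [show ∑ j, f j = f i + ∑ j ∈ Finset.univ \ {i}, f j from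
    (Finset.sum_eq_add_sum_sdiff_singleton_of_mem (Finset.mem_univ i) f)]
  omega

/-! ### Words fixed by `invRev`, and `norm x ≤ norm (x * x)` -/

theorem invRev_cons (y : α × Bool) (b : List (α × Bool)) :
    FreeGroup.invRev (y :: b) = FreeGroup.invRev b ++ [(y.1, !y.2)] := by
  simp [FreeGroup.invRev]

theorem invRev_eq_self_iff {D : List (α × Bool)} (hred : Reduced D)
    (h : FreeGroup.invRev D = D) : D = [] := by
  by_contra hne
  have hm : 0 < D.length := List.length_pos_iff.mpr hne
  have key : ∀ j j' (hj : j < D.length) (hj' : j' < D.length), j + j' + 1 = D.length →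
      D[j] = ((D[j']'hj').1, !(D[j']'hj').2) := by
    intro j j' hj hj' hsum
    have q1 : (FreeGroup.invRev D)[j]? = D[j]? := by rw [h]
    have q2 : (FreeGroup.invRev D)[j]? =
        (D[j']?).map (fun p : α × Bool => (p.1, !p.2)) := by
      show ((D.map (fun g : α × Bool => (g.1, !g.2))).reverse)[j]? = _
      rw [List.getElem?_reverse (by simpa using (by omega : j < D.length)),
        List.getElem?_map]
      have e : (D.map (fun g : α × Bool => (g.1, !g.2))).length - 1 - j = j' := by
        simp; omega
      rw [e]
    rw [q1, List.getElem?_eq_getElem hj, List.getElem?_eq_getElem hj'] at q2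
    simpa using q2
  rcases Nat.even_or_odd D.length with he | ho
  · obtain ⟨m, hm2⟩ := he
    have hm1 : 1 ≤ m := by omega
    have hpair := key (m - 1) (m - 1 + 1) (by omega) (by omega) (by omega)
    have hchain := List.isChain_iff_getElem.mp hred (m - 1) (by omega)
    exact hchain ⟨by rw [hpair], by rw [hpair]; simp⟩
  · obtain ⟨m, hm2⟩ := ho
    have hj := key m m (by omega) (by omega) (by omega)
    have := congrArg Prod.snd hj
    simp at this

theorem not_reduced_invRev_append {b : List (α × Bool)} (hb : b ≠ []) :
    ¬ Reduced (FreeGroup.invRev b ++ b) := by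
  intro hred
  rcases b with _ | ⟨y, b'⟩
  · exact hb rfl
  rw [invRev_cons] at hred
  have h := (List.isChain_append.mp hred).2.2
  have := h (y.1, !y.2) (by simp [List.getLast?_concat]) y rfl
  simp at this

theorem norm_le_norm_sq (x : FreeGroup α) : FreeGroup.norm x ≤ FreeGroup.norm (x * x) := by
  obtain ⟨A, C, B, h1, h2, h3⟩ := mul_decomp x x
  have l1 : FreeGroup.norm x = A.length + C.length := by
    rw [norm_toWord, h1, List.length_append]
  have l2 : FreeGroup.norm x = C.length + B.length := by
    rw [norm_toWord, h2, List.length_append, FreeGroup.invRev_length]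
  have l3 : FreeGroup.norm (x * x) = A.length + B.length := by
    rw [norm_toWord, h3, List.length_append]
  have hAB : A.length = B.length := by omega
  suffices hCA : C.length ≤ A.length by omega
  by_contra hlt
  push_neg at hlt
  -- A is a prefix of invRev C
  have hw : A ++ C = FreeGroup.invRev C ++ B := by rw [← h1, ← h2]
  have hA : A = (FreeGroup.invRev C).take A.length := by
    have hstep := congrArg (List.take A.length) hw
    rwa [List.take_append_of_le_length (le_refl _),
      List.take_append_of_le_length (by rw [FreeGroup.invRev_length]; omega),
      List.take_of_length_le (le_refl _)] at hstep
  set D := (FreeGroup.invRev C).drop A.length with hD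
  have hsplit : FreeGroup.invRev C = A ++ D := by
    rw [hA, hD]; exact (List.take_append_drop _ _).symm
  have hC : C = D ++ B := by
    have : A ++ C = A ++ (D ++ B) := by rw [hw, hsplit, List.append_assoc]
    exact List.append_cancel_left this
  have hDlen : D.length = C.length - A.length := by
    rw [hD, List.length_drop, FreeGroup.invRev_length]
  have hinj : FreeGroup.invRev B = A ∧ FreeGroup.invRev D = D := by
    have : FreeGroup.invRev B ++ FreeGroup.invRev D = A ++ D := by
      rw [← invRev_append', ← hC, hsplit]
    exact List.append_inj this (by rw [FreeGroup.invRev_length]; omega)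
  have hDred : Reduced D := by
    have hCred : Reduced C := (reduced_toWord x).infix ⟨A, [], by simp [h1]⟩
    exact hCred.infix ⟨[], B, by simp [hC]⟩
  have := invRev_eq_self_iff hDred hinj.2
  rw [this] at hDlen
  simp at hDlen
  omega

/-! ### Consequences of minimality: N1 and no duplicates -/

variable {k n : ℕ}

theorem weight_update_lt {T₀ : Fin n → FreeGroup (Fin k)} {i : Fin n}
    {v : FreeGroup (Fin k)} (hnorm : FreeGroup.norm v < FreeGroup.norm (T₀ i)) :
    weight (Function.update T₀ i v) < weight T₀ := by
  unfold weight
  have e : ∀ j, FreeGroup.norm (Function.update T₀ i v j) =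
      Function.update (fun j => FreeGroup.norm (T₀ j)) i (FreeGroup.norm v) j := by
    intro j
    rcases eq_or_ne j i with rfl | h
    · simp
    · simp [Function.update_of_ne h]
  rw [Finset.sum_congr rfl (fun j _ => e j)]
  exact sum_update_lt _ i _ hnorm

theorem weight_update_eq {T₀ : Fin n → FreeGroup (Fin k)} {i : Fin n}
    {v : FreeGroup (Fin k)} (hnorm : FreeGroup.norm v = FreeGroup.norm (T₀ i)) :
    weight (Function.update T₀ i v) = weight T₀ := by
  unfold weight
  have e : ∀ j, FreeGroup.norm (Function.update T₀ i v j) =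
      Function.update (fun j => FreeGroup.norm (T₀ j)) i (FreeGroup.norm v) j := by
    intro j
    rcases eq_or_ne j i with rfl | h
    · simp
    · simp [Function.update_of_ne h]
  rw [Finset.sum_congr rfl (fun j _ => e j)]
  exact sum_update_eq_of_eq _ i _ hnorm

theorem mu2_update_lt {T₀ : Fin n → FreeGroup (Fin k)} {i : Fin n}
    {v : FreeGroup (Fin k)} (hpm : pm v < pm (T₀ i)) :
    mu2 (Function.update T₀ i v) < mu2 T₀ := by
  unfold mu2
  have e : ∀ j, pm (Function.update T₀ i v j) =
      Function.update (fun j => pm (T₀ j)) i (pm v) j := by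
    intro j
    rcases eq_or_ne j i with rfl | h
    · simp
    · simp [Function.update_of_ne h]
  rw [Finset.sum_congr rfl (fun j _ => e j)]
  exact sum_update_lt _ i _ hpm

/-- The set of entries and their inverses. -/
def UU (T₀ : Fin n → FreeGroup (Fin k)) (g : FreeGroup (Fin k)) : Prop :=
  ∃ i, T₀ i = g ∨ T₀ i = g⁻¹

theorem UU.inv {T₀ : Fin n → FreeGroup (Fin k)} {g} (h : UU T₀ g) : UU T₀ g⁻¹ := by
  obtain ⟨i, hi | hi⟩ := h
  · exact ⟨i, Or.inr (by rw [hi, inv_inv])⟩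
  · exact ⟨i, Or.inl hi⟩

/-- Minimality of a tuple in its Nielsen class w.r.t. the measure. -/
def IsMin (T₀ : Fin n → FreeGroup (Fin k)) : Prop :=
  ∀ T', NielsenEquiv T₀ T' → ¬ MLt T' T₀

theorem normA {T₀ : Fin n → FreeGroup (Fin k)} (hmin : IsMin T₀) {i j : Fin n} (hij : i ≠ j)
    (e : Bool) (g : FreeGroup (Fin k)) (hg : g = T₀ j ∨ g = (T₀ j)⁻¹) :
    FreeGroup.norm (T₀ i) ≤ FreeGroup.norm ((cond e (T₀ i) (T₀ i)⁻¹) * g) := by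
  by_contra hlt
  push_neg at hlt
  refine hmin _ (ne_replace T₀ i j hij e g hg) (Or.inl (weight_update_lt ?_))
  cases e
  · show FreeGroup.norm (((T₀ i)⁻¹ * g)⁻¹) < FreeGroup.norm (T₀ i)
    rw [FreeGroup.norm_inv_eq]
    exact hlt
  · exact hlt

/-- N1 at the level of `U^±`. -/
theorem normN1 {T₀ : Fin n → FreeGroup (Fin k)} (hmin : IsMin T₀) {u v : FreeGroup (Fin k)}
    (hu : UU T₀ u) (hv : UU T₀ v) (huv : u * v ≠ 1) :
    FreeGroup.norm u ≤ FreeGroup.norm (u * v) := by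
  rcases eq_or_ne u v with rfl | hne
  · exact norm_le_norm_sq u
  obtain ⟨i, hi⟩ := hu
  obtain ⟨j, hj⟩ := hv
  have hij : i ≠ j := by
    rintro rfl
    rcases hi with hi | hi <;> rcases hj with hj | hj
    · exact hne (hi.symm.trans hj)
    · exact huv (by rw [show u = v⁻¹ from hi.symm.trans hj, inv_mul_cancel])
    · exact huv (by rw [show v = u⁻¹ from (hi.symm.trans hj).symm, mul_inv_cancel])
    · exact hne (inv_injective (hi.symm.trans hj))
  have hgv : v = T₀ j ∨ v = (T₀ j)⁻¹ := by
    rcases hj with hj | hj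
    · exact Or.inl hj.symm
    · exact Or.inr (by rw [hj, inv_inv])
  rcases hi with hi | hi
  · have := normA hmin hij true v hgv
    rw [hi] at this
    simpa using this
  · have := normA hmin hij false v hgv
    rw [hi] at this
    simpa [FreeGroup.norm_inv_eq] using this

theorem normN1' {T₀ : Fin n → FreeGroup (Fin k)} (hmin : IsMin T₀) {u v : FreeGroup (Fin k)}
    (hu : UU T₀ u) (hv : UU T₀ v) (huv : u * v ≠ 1) :
    FreeGroup.norm v ≤ FreeGroup.norm (u * v) := by
  have h := normN1 hmin hv.inv hu.inv
    (fun h => huv (by rwa [← mul_inv_rev, inv_eq_one] at h))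
  rw [← mul_inv_rev, FreeGroup.norm_inv_eq, FreeGroup.norm_inv_eq] at h
  exact h

/-- Distinct indices carry distinct (up to inverse) nontrivial entries. -/
theorem factB {T₀ : Fin n → FreeGroup (Fin k)} (hmin : IsMin T₀) {i j : Fin n} (hij : i ≠ j)
    (hne1 : T₀ i ≠ 1) : T₀ i ≠ T₀ j ∧ T₀ i ≠ (T₀ j)⁻¹ := by
  constructor
  · intro he
    have h2 := normA hmin hij true ((T₀ j)⁻¹) (Or.inr rfl)
    rw [cond, he, mul_inv_cancel] at h2
    refine hne1 ?_
    rw [he]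
    exact FreeGroup.norm_eq_zero.mp (Nat.le_zero.mp (by simpa using h2))
  · intro he
    have h2 := normA hmin hij true (T₀ j) (Or.inl rfl)
    rw [cond, he, inv_mul_cancel] at h2
    refine hne1 ?_
    rw [he]
    have : (T₀ j)⁻¹ = 1 := by
      rw [← FreeGroup.norm_eq_zero, FreeGroup.norm_inv_eq]
      exact Nat.le_zero.mp (by simpa [FreeGroup.norm_inv_eq] using h2)
    exact this

theorem take_block {β : Type*} {X Y : List β} {t : ℕ} (h : X.length ≤ t) :
    (X ++ Y).take t = X ++ Y.take (t - X.length) := by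
  rw [List.take_append, List.take_of_length_le h]

/-- N2 condition, derived from minimality. -/
theorem factC {T₀ : Fin n → FreeGroup (Fin k)} (hmin : IsMin T₀) {u v w : FreeGroup (Fin k)}
    (hu : UU T₀ u) (hv : UU T₀ v) (hw : UU T₀ w) (hv1 : v ≠ 1)
    (huv : u * v ≠ 1) (hvw : v * w ≠ 1)
    (h1 : FreeGroup.norm (u * v) = FreeGroup.norm u)
    (h2 : FreeGroup.norm (v * w) = FreeGroup.norm w) : False := by
  obtain ⟨P, C, B', e1, e2, e3⟩ := mul_decomp u v
  obtain ⟨A₂, C₂, B₂, f1, f2, f3⟩ := mul_decomp v w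
  have nu : FreeGroup.norm u = P.length + C.length := by
    rw [norm_toWord, e1, List.length_append]
  have nuv : FreeGroup.norm (u * v) = P.length + B'.length := by
    rw [norm_toWord, e3, List.length_append]
  have nv : FreeGroup.norm v = C.length + B'.length := by
    rw [norm_toWord, e2, List.length_append, FreeGroup.invRev_length]
  have nv2 : FreeGroup.norm v = A₂.length + C₂.length := by
    rw [norm_toWord, f1, List.length_append]
  have nw : FreeGroup.norm w = C₂.length + B₂.length := by
    rw [norm_toWord, f2, List.length_append, FreeGroup.invRev_length]
  have nvw : FreeGroup.norm (v * w) = A₂.length + B₂.length := by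
    rw [norm_toWord, f3, List.length_append]
  have hBC : B'.length = C.length := by omega
  have hA2C2 : A₂.length = C₂.length := by omega
  have hC2C : C₂.length = C.length := by omega
  obtain ⟨hA2, hC2⟩ : FreeGroup.invRev C = A₂ ∧ B' = C₂ :=
    List.append_inj (e2.symm.trans f1) (by rw [FreeGroup.invRev_length]; omega)
  have hs : 1 ≤ C.length := by
    rcases Nat.eq_zero_or_pos C.length with h0 | h0
    · exact absurd (FreeGroup.norm_eq_zero.mp (by omega)) hv1
    · exact h0
  have hPge : C.length ≤ P.length := by
    have := normN1' hmin hu hv huv; omega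
  have hB2ge : C.length ≤ B₂.length := by
    have := normN1 hmin hv hw hvw; omega
  have hCB : C ≠ B' := by
    intro hEq
    have hred := reduced_toWord v
    rw [e2, ← hEq] at hred
    exact not_reduced_invRev_append (by intro h0; rw [h0] at hs; simp at hs) hred
  have hencne : enc (FreeGroup.invRev C) ≠ enc (FreeGroup.invRev B') := by
    intro hEq
    exact hCB (FreeGroup.invRev_injective
      (enc_inj (by rw [FreeGroup.invRev_length, FreeGroup.invRev_length]; omega) hEq))
  have hune : u ≠ v := by
    intro hEq
    have hPC : P.length = C.length := by rw [hEq] at nu; omega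
    have hwords : P ++ C = FreeGroup.invRev C ++ B' := by rw [← e1, hEq, e2]
    obtain ⟨_, hc⟩ := List.append_inj hwords (by rw [FreeGroup.invRev_length]; omega)
    exact hCB hc
  have hwne : w ≠ v := by
    intro hEq
    have hlen : B₂.length = C.length := by rw [hEq] at nw; omega
    have hwords : FreeGroup.invRev C₂ ++ B₂ = FreeGroup.invRev C ++ B' := by
      rw [← f2, hEq, e2]
    obtain ⟨hp, _⟩ := List.append_inj hwords
      (by rw [FreeGroup.invRev_length, FreeGroup.invRev_length]; omega)
    rw [← hC2] at hp
    exact hCB (FreeGroup.invRev_injective hp).symm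
  have hne2 : u ≠ v⁻¹ := fun h => huv (by rw [h, inv_mul_cancel])
  have hne2w : w ≠ v⁻¹ := fun h => hvw (by rw [h, mul_inv_cancel])
  have hidx : ∀ {x y : FreeGroup (Fin k)} {i j : Fin n},
      (T₀ i = x ∨ T₀ i = x⁻¹) → (T₀ j = y ∨ T₀ j = y⁻¹) → x ≠ y → x ≠ y⁻¹ → i ≠ j := by
    rintro x y i j hx hy hne hne' rfl
    rcases hx with hx | hx <;> rcases hy with hy | hy
    · exact hne (hx.symm.trans hy)
    · exact hne' (hx.symm.trans hy)
    · exact hne' (by rw [← (hx.symm.trans hy), inv_inv])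
    · exact hne (inv_injective (hx.symm.trans hy))
  have wuinv : (u⁻¹).toWord = FreeGroup.invRev C ++ FreeGroup.invRev P := by
    rw [FreeGroup.toWord_inv, e1, invRev_append']
  have wuvinv : ((u * v)⁻¹).toWord = FreeGroup.invRev B' ++ FreeGroup.invRev P := by
    rw [FreeGroup.toWord_inv, e3, invRev_append']
  have wwinv : (w⁻¹).toWord = FreeGroup.invRev B₂ ++ B' := by
    rw [FreeGroup.toWord_inv, f2, invRev_append', invRev_invRev, ← hC2]
  have wvwinv : ((v * w)⁻¹).toWord = FreeGroup.invRev B₂ ++ C := by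
    rw [FreeGroup.toWord_inv, f3, invRev_append', ← hA2, invRev_invRev]
  have ww : w.toWord = FreeGroup.invRev B' ++ B₂ := by rw [f2, ← hC2]
  have wvw : (v * w).toWord = FreeGroup.invRev C ++ B₂ := by rw [f3, ← hA2]
  rcases lt_or_gt_of_ne hencne with hlt | hlt
  · -- MOVE 4 : replace the entry holding `w` by `v * w`
    have ht'1 : C.length ≤ (FreeGroup.norm w + 1) / 2 := by omega
    have ht'2 : (FreeGroup.norm w + 1) / 2 ≤ B₂.length := by omega
    have hpm : pm (v * w) < pm w := by
      unfold pm
      rw [h2, wvw, wvwinv, ww, wwinv]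
      rw [take_block (X := FreeGroup.invRev C) (Y := B₂)
          (by rw [FreeGroup.invRev_length]; exact ht'1),
        take_block (X := FreeGroup.invRev B') (Y := B₂)
          (by rw [FreeGroup.invRev_length]; omega),
        List.take_append_of_le_length (l₁ := FreeGroup.invRev B₂) (l₂ := C)
          (by rw [FreeGroup.invRev_length]; exact ht'2),
        List.take_append_of_le_length (l₁ := FreeGroup.invRev B₂) (l₂ := B')
          (by rw [FreeGroup.invRev_length]; exact ht'2)]
      rw [FreeGroup.invRev_length (L₁ := C), FreeGroup.invRev_length (L₁ := B'), hBC]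
      have hblock := enc_lt_of_blocks (R := B₂.take ((FreeGroup.norm w + 1) / 2 - C.length))
        (S := B₂.take ((FreeGroup.norm w + 1) / 2 - C.length))
        (by rw [FreeGroup.invRev_length, FreeGroup.invRev_length]; omega) rfl hlt
      omega
    obtain ⟨i, hi⟩ := hw
    obtain ⟨j, hj⟩ := hv
    have hij : i ≠ j := hidx hi hj hwne hne2w
    have hgv : v⁻¹ = T₀ j ∨ v⁻¹ = (T₀ j)⁻¹ := by
      rcases hj with hj | hj
      · exact Or.inr (by rw [hj])
      · exact Or.inl hj.symm
    rcases hi with hi | hi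
    · refine hmin _ (ne_replace T₀ i j hij false (v⁻¹) hgv)
        (Or.inr ⟨weight_update_eq ?_, mu2_update_lt ?_⟩)
      · show FreeGroup.norm (((T₀ i)⁻¹ * v⁻¹)⁻¹) = FreeGroup.norm (T₀ i)
        rw [show ((T₀ i)⁻¹ * v⁻¹)⁻¹ = v * T₀ i by group, hi, h2]
      · show pm (((T₀ i)⁻¹ * v⁻¹)⁻¹) < pm (T₀ i)
        rw [show ((T₀ i)⁻¹ * v⁻¹)⁻¹ = v * T₀ i by group, hi]
        exact hpm
    · refine hmin _ (ne_replace T₀ i j hij true (v⁻¹) hgv)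
        (Or.inr ⟨weight_update_eq ?_, mu2_update_lt ?_⟩)
      · show FreeGroup.norm (T₀ i * v⁻¹) = FreeGroup.norm (T₀ i)
        rw [hi, show w⁻¹ * v⁻¹ = (v * w)⁻¹ by group, FreeGroup.norm_inv_eq,
          FreeGroup.norm_inv_eq, h2]
      · show pm (T₀ i * v⁻¹) < pm (T₀ i)
        rw [hi, show w⁻¹ * v⁻¹ = (v * w)⁻¹ by group, pm_inv, pm_inv]
        exact hpm
  · -- MOVE 3 : replace the entry holding `u` by `u * v`
    have ht1 : (FreeGroup.norm u + 1) / 2 ≤ P.length := by omega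
    have ht2 : C.length ≤ (FreeGroup.norm u + 1) / 2 := by omega
    have hpm : pm (u * v) < pm u := by
      unfold pm
      rw [h1, e3, wuvinv, e1, wuinv]
      rw [List.take_append_of_le_length (l₁ := P) (l₂ := B') ht1,
        List.take_append_of_le_length (l₁ := P) (l₂ := C) ht1,
        take_block (X := FreeGroup.invRev B') (Y := FreeGroup.invRev P)
          (by rw [FreeGroup.invRev_length]; omega),
        take_block (X := FreeGroup.invRev C) (Y := FreeGroup.invRev P)
          (by rw [FreeGroup.invRev_length]; omega)]
      rw [FreeGroup.invRev_length (L₁ := C), FreeGroup.invRev_length (L₁ := B'), hBC]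
      have hblock := enc_lt_of_blocks
        (R := (FreeGroup.invRev P).take ((FreeGroup.norm u + 1) / 2 - C.length))
        (S := (FreeGroup.invRev P).take ((FreeGroup.norm u + 1) / 2 - C.length))
        (by rw [FreeGroup.invRev_length, FreeGroup.invRev_length]; omega) rfl hlt
      omega
    obtain ⟨i, hi⟩ := hu
    obtain ⟨j, hj⟩ := hv
    have hij : i ≠ j := hidx hi hj hune hne2
    have hgv : v = T₀ j ∨ v = (T₀ j)⁻¹ := by
      rcases hj with hj | hj
      · exact Or.inl hj.symm
      · exact Or.inr (by rw [hj, inv_inv])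
    rcases hi with hi | hi
    · refine hmin _ (ne_replace T₀ i j hij true v hgv)
        (Or.inr ⟨weight_update_eq ?_, mu2_update_lt ?_⟩)
      · show FreeGroup.norm (T₀ i * v) = FreeGroup.norm (T₀ i)
        rw [hi, h1]
      · show pm (T₀ i * v) < pm (T₀ i)
        rw [hi]
        exact hpm
    · refine hmin _ (ne_replace T₀ i j hij false v hgv)
        (Or.inr ⟨weight_update_eq ?_, mu2_update_lt ?_⟩)
      · show FreeGroup.norm (((T₀ i)⁻¹ * v)⁻¹) = FreeGroup.norm (T₀ i)
        rw [hi, show ((u⁻¹)⁻¹ * v)⁻¹ = (u * v)⁻¹ by group, FreeGroup.norm_inv_eq,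
          FreeGroup.norm_inv_eq, h1]
      · show pm (((T₀ i)⁻¹ * v)⁻¹) < pm (T₀ i)
        rw [hi, show ((u⁻¹)⁻¹ * v)⁻¹ = (u * v)⁻¹ by group, pm_inv, pm_inv]
        exact hpm

/-! ### Expressing elements as clean products of generators -/

theorem mem_of_getLast?' {β : Type*} {l : List β} {a : β} (h : l.getLast? = some a) :
    a ∈ l := by
  cases l with
  | nil => simp at h
  | cons x t =>
    rw [List.getLast?_eq_getLast (l := x :: t) (by simp)] at h
    exact (Option.some.inj h) ▸ List.getLast_mem _

theorem suffix_of_suffix_le {β : Type*} {l₁ l₂ L : List β} (h₁ : l₁ <:+ L) (h₂ : l₂ <:+ L)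
    (h : l₁.length ≤ l₂.length) : l₁ <:+ l₂ := by
  have e1 := List.suffix_iff_eq_drop.mp h₁
  have e2 := List.suffix_iff_eq_drop.mp h₂
  have hle := h₂.length_le
  have hdrop : l₁ = List.drop (l₂.length - l₁.length) l₂ := by
    calc l₁ = List.drop (L.length - l₁.length) L := e1
      _ = List.drop ((L.length - l₂.length) + (l₂.length - l₁.length)) L := by
            rw [show (L.length - l₂.length) + (l₂.length - l₁.length)
              = L.length - l₁.length by omega]
      _ = List.drop (l₂.length - l₁.length) (List.drop (L.length - l₂.length) L) :=
            List.drop_drop.symm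
      _ = List.drop (l₂.length - l₁.length) l₂ := (congrArg _ e2).symm
  have hsplit := List.take_append_drop (l₂.length - l₁.length) l₂
  rw [← hdrop] at hsplit
  exact ⟨_, hsplit⟩

theorem exists_word_list {T₀ : Fin n → FreeGroup (Fin k)}
    (hgen : Subgroup.closure (Set.range T₀) = ⊤) (x : FreeGroup (Fin k)) :
    ∃ l : List (FreeGroup (Fin k)), (∀ g ∈ l, UU T₀ g) ∧ l.prod = x := by
  have hx : x ∈ Submonoid.closure (Set.range T₀ ∪ (Set.range T₀)⁻¹) := by
    rw [← Subgroup.closure_toSubmonoid, hgen]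
    trivial
  obtain ⟨l, hl, hprod⟩ := Submonoid.exists_list_of_mem_closure hx
  refine ⟨l, fun g hg => ?_, hprod⟩
  rcases hl g hg with h | h
  · obtain ⟨i, hi⟩ := h
    exact ⟨i, Or.inl hi⟩
  · obtain ⟨i, hi⟩ := Set.mem_inv.mp h
    exact ⟨i, Or.inr hi⟩

theorem cleanup {T₀ : Fin n → FreeGroup (Fin k)} :
    ∀ l : List (FreeGroup (Fin k)), (∀ g ∈ l, UU T₀ g) →
    ∃ l' : List (FreeGroup (Fin k)), (∀ g ∈ l', UU T₀ g) ∧ l'.prod = l.prod ∧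
      (∀ g ∈ l', g ≠ 1) ∧ List.Chain' (fun g h => g * h ≠ 1) l' := by
  intro l
  induction l with
  | nil => exact fun _ => ⟨[], by simp, rfl, by simp, List.isChain_nil⟩
  | cons g t ih =>
    intro hmem
    obtain ⟨t', h1, h2, h3, h4⟩ := ih (fun x hx => hmem x (List.mem_cons_of_mem _ hx))
    by_cases hg : g = 1
    · exact ⟨t', h1, by rw [List.prod_cons (l := t) (a := g), hg, one_mul]; exact h2, h3, h4⟩
    cases t' with
    | nil =>
      refine ⟨[g], ?_, ?_, ?_, ?_⟩
      · intro x hx; rw [List.mem_singleton] at hx; exact hx ▸ hmem g (List.mem_cons_self)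
      · rw [List.prod_cons (l := t) (a := g), ← h2]; simp
      · intro x hx; rw [List.mem_singleton] at hx; exact hx ▸ hg
      · simp [List.Chain']
    | cons h t'' =>
      by_cases hgh : g * h = 1
      · refine ⟨t'', fun x hx => h1 x (List.mem_cons_of_mem _ hx), ?_,
          fun x hx => h3 x (List.mem_cons_of_mem _ hx), (List.isChain_cons.mp h4).2⟩
        rw [List.prod_cons (l := t) (a := g), ← h2, List.prod_cons, ← mul_assoc, hgh, one_mul]
      · refine ⟨g :: h :: t'', ?_, ?_, ?_, ?_⟩
        · intro x hx
          rcases List.mem_cons.mp hx with rfl | hx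
          · exact hmem x (List.mem_cons_self)
          · exact h1 x hx
        · rw [List.prod_cons (l := t) (a := g), ← h2, List.prod_cons]
        · intro x hx
          rcases List.mem_cons.mp hx with rfl | hx
          · exact hg
          · exact h3 x hx
        · exact List.isChain_cons_cons.mpr ⟨hgh, h4⟩

/-- The key invariant: in a clean product, more than half (weakly) of the final factor
survives, with exact-half cancellation certified by a previous factor; and products of
length ≥ 2 have norm ≥ 2. -/
theorem sig_main {T₀ : Fin n → FreeGroup (Fin k)} (hmin : IsMin T₀) :
    ∀ l : List (FreeGroup (Fin k)), l ≠ [] → (∀ g ∈ l, UU T₀ g) → (∀ g ∈ l, g ≠ 1) →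
    List.Chain' (fun g h => g * h ≠ 1) l →
    ∃ (r s : List (Fin k × Bool)) (last : FreeGroup (Fin k)),
      l.getLast? = some last ∧
      l.prod.toWord = r ++ s ∧ s <:+ last.toWord ∧
      FreeGroup.norm last ≤ 2 * s.length ∧
      (FreeGroup.norm last = 2 * s.length →
        ∃ u', UU T₀ u' ∧ u' * last ≠ 1 ∧
          FreeGroup.norm (u' * last) = FreeGroup.norm u') ∧
      (2 ≤ l.length → 2 ≤ FreeGroup.norm l.prod) := by
  intro l
  induction l using List.reverseRecOn with
  | nil => exact fun h => absurd rfl h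
  | append_singleton M u ih =>
    intro _ hUm hne1 hch
    have hUUu : UU T₀ u := hUm u (List.mem_append_right _ (List.mem_singleton_self _))
    rcases eq_or_ne M [] with rfl | hM
    · refine ⟨[], u.toWord, u, by simp, by simp, List.suffix_refl _, ?_, ?_, ?_⟩
      · rw [norm_toWord]; omega
      · intro hEq
        exfalso
        rw [norm_toWord] at hEq
        have h0 : u.toWord.length = 0 := by omega
        exact hne1 u (by simp) (FreeGroup.toWord_eq_nil_iff.mp (List.length_eq_zero_iff.mp h0))
      · intro h2; simp at h2
    · obtain ⟨r, s, v₀, hlast, hsplit, hsuffix, hhalf, hflag, hlen2⟩ :=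
        ih hM (fun g hg => hUm g (List.mem_append_left _ hg))
          (fun g hg => hne1 g (List.mem_append_left _ hg))
          (List.isChain_append.mp hch).1
      have hv₀mem : v₀ ∈ M := mem_of_getLast?' hlast
      have hUUv₀ : UU T₀ v₀ := hUm v₀ (List.mem_append_left _ hv₀mem)
      have hv₀ne1 : v₀ ≠ 1 := hne1 v₀ (List.mem_append_left _ hv₀mem)
      have hv₀u : v₀ * u ≠ 1 := (List.isChain_append.mp hch).2.2 v₀ hlast u rfl
      set p := M.prod with hp
      have hprodeq : (M ++ [u]).prod = p * u := by rw [List.prod_append]; simp [hp]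
      obtain ⟨A, Cc, B, d1, d2, d3⟩ := mul_decomp p u
      have np : FreeGroup.norm p = A.length + Cc.length := by
        rw [norm_toWord, d1, List.length_append]
      have nu : FreeGroup.norm u = Cc.length + B.length := by
        rw [norm_toWord, d2, List.length_append, FreeGroup.invRev_length]
      have npu : FreeGroup.norm (p * u) = A.length + B.length := by
        rw [norm_toWord, d3, List.length_append]
      have hsplitlen : p.toWord.length = r.length + s.length := by
        rw [hsplit, List.length_append]
      have hN1v := normN1 hmin hUUv₀ hUUu hv₀u
      have hN1u := normN1' hmin hUUv₀ hUUu hv₀u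
      -- Step (α): the cancelled part is strictly shorter than the protected suffix s
      have hClt : Cc.length < s.length := by
        by_contra hge
        push_neg at hge
        have hsC : s <:+ Cc := suffix_of_suffix_le ⟨r, hsplit.symm⟩ ⟨A, d1.symm⟩ hge
        obtain ⟨C₁, hC₁⟩ := hsC
        obtain ⟨D, hD1, hD2⟩ := eq_mk_of_suffix hsuffix
        have hu_eq : u = FreeGroup.mk (FreeGroup.invRev s ++ (FreeGroup.invRev C₁ ++ B)) := by
          rw [← FreeGroup.mk_toWord (x := u), d2, ← hC₁, invRev_append', List.append_assoc]
        have hle := norm_mul_le_parts hD2 hu_eq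
        rw [List.length_append, FreeGroup.invRev_length] at hle
        have hv₀n : FreeGroup.norm v₀ = D.length + s.length := by
          rw [norm_toWord, hD1, List.length_append]
        have hCclen : Cc.length = C₁.length + s.length := by
          rw [← hC₁, List.length_append]
        have hEqs : FreeGroup.norm (v₀ * u) = FreeGroup.norm u ∧
            FreeGroup.norm v₀ = 2 * s.length := by omega
        obtain ⟨u', hUU', hne', hn'⟩ := hflag hEqs.2
        exact factC hmin hUU' hUUv₀ hUUu hv₀ne1 hne' hv₀u hn' hEqs.1
      -- Step (β): hence at most half of u cancels
      have hsC2 : Cc <:+ s := suffix_of_suffix_le ⟨A, d1.symm⟩ ⟨r, hsplit.symm⟩ (le_of_lt hClt)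
      obtain ⟨D₀, hD₀1, hD₀2⟩ := eq_mk_of_suffix (hsC2.trans hsuffix)
      have hu_eq2 : u = FreeGroup.mk (FreeGroup.invRev Cc ++ B) := by
        rw [← FreeGroup.mk_toWord (x := u), d2]
      have hle2 := norm_mul_le_parts hD₀2 hu_eq2
      have hv₀n2 : FreeGroup.norm v₀ = D₀.length + Cc.length := by
        rw [norm_toWord, hD₀1, List.length_append]
      have h2C : 2 * Cc.length ≤ FreeGroup.norm u := by omega
      refine ⟨A, B, u, List.getLast?_concat, by rw [hprodeq]; exact d3,
        ⟨FreeGroup.invRev Cc, d2.symm⟩, by omega, ?_, ?_⟩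
      · intro hEq
        exact ⟨v₀, hUUv₀, hv₀u, by omega⟩
      · intro _
        rw [hprodeq]
        rcases Nat.lt_or_ge M.length 2 with hM1 | hM2
        · have hM1' : M.length = 1 := by
            have := List.length_pos_iff.mpr hM; omega
          obtain ⟨g, rfl⟩ := List.length_eq_one_iff.mp hM1'
          have hgv : g = v₀ := by simpa using hlast
          have hpg : p = v₀ := by rw [hp, ← hgv]; simp
          have hnv₀ : 1 ≤ FreeGroup.norm v₀ := by
            rcases Nat.eq_zero_or_pos (FreeGroup.norm v₀) with h0 | h0
            · exact absurd (FreeGroup.norm_eq_zero.mp h0) hv₀ne1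
            · exact h0
          have hnu : 1 ≤ FreeGroup.norm u := by
            rcases Nat.eq_zero_or_pos (FreeGroup.norm u) with h0 | h0
            · exact absurd (FreeGroup.norm_eq_zero.mp h0)
                (hne1 u (List.mem_append_right _ (List.mem_singleton_self _)))
            · exact h0
          rw [hpg] at np npu ⊢
          rcases Nat.lt_or_ge 1 (FreeGroup.norm v₀) with hb | hb
          · omega
          rcases Nat.lt_or_ge 1 (FreeGroup.norm u) with hb2 | hb2
          · omega
          -- both length 1
          rcases Nat.eq_zero_or_pos Cc.length with hcc | hcc
          · omega
          · exfalso
            have hA0 : A = [] := List.length_eq_zero_iff.mp (by omega)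
            have hB0 : B = [] := List.length_eq_zero_iff.mp (by omega)
            have huv₀ : u = v₀⁻¹ := by
              apply FreeGroup.toWord_injective
              rw [d2, hB0, List.append_nil, FreeGroup.toWord_inv]
              congr 1
              rw [← hpg, d1, hA0, List.nil_append]
            exact hv₀u (by rw [huv₀, mul_inv_cancel])
        · have := hlen2 hM2
          omega

/-- Every letter occurs (up to sign) among the entries of a minimal generating tuple. -/
theorem factD {T₀ : Fin n → FreeGroup (Fin k)} (hmin : IsMin T₀)
    (hgen : Subgroup.closure (Set.range T₀) = ⊤) (a : Fin k) :
    UU T₀ (FreeGroup.of a) := by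
  obtain ⟨l₀, hl₀, hprod₀⟩ := exists_word_list hgen (FreeGroup.of a)
  obtain ⟨l, hl, hprod, hne1, hch⟩ := cleanup l₀ hl₀
  rw [hprod₀] at hprod
  cases l with
  | nil => exact absurd (by simpa using hprod) (FreeGroup.one_ne_of a)
  | cons g t =>
    cases t with
    | nil =>
      have : g = FreeGroup.of a := by simpa using hprod
      exact this ▸ hl g (List.mem_cons_self)
    | cons h t' =>
      exfalso
      obtain ⟨r, s, last, _, _, _, _, _, hlen2⟩ :=
        sig_main hmin (g :: h :: t') (by simp) hl hne1 hch
      have h2n := hlen2 (by simp only [List.length_cons]; omega)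
      rw [hprod, FreeGroup.norm_of] at h2n
      omega

/-- Every entry of a minimal generating tuple has norm at most 1. -/
theorem factE {T₀ : Fin n → FreeGroup (Fin k)} (hmin : IsMin T₀)
    (hgen : Subgroup.closure (Set.range T₀) = ⊤) (i : Fin n) :
    FreeGroup.norm (T₀ i) ≤ 1 := by
  by_contra hlt
  push_neg at hlt
  set u := T₀ i with hu
  obtain ⟨Z, z, hZ⟩ : ∃ Z z, u.toWord = Z ++ [z] := by
    rcases List.eq_nil_or_concat u.toWord with h0 | h0
    · rw [norm_toWord, h0] at hlt; simp at hlt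
    · obtain ⟨L0, b0, hc⟩ := h0
      exact ⟨L0, b0, by rw [hc, List.concat_eq_append]⟩
  have hZlen : FreeGroup.norm u = Z.length + 1 := by
    rw [norm_toWord, hZ, List.length_append, List.length_cons, List.length_nil]
  set g : FreeGroup (Fin k) := FreeGroup.mk [(z.1, !z.2)] with hg
  have hUUg : UU T₀ g := by
    have hofUU : UU T₀ (FreeGroup.of z.1) := factD hmin hgen z.1
    cases hb : z.2
    · -- z = (a, false); g = mk [(a, true)] = of a
      have : g = FreeGroup.of z.1 := by
        rw [hg, hb]
        rfl
      exact this ▸ hofUU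
    · -- z = (a, true); g = mk [(a, false)] = (of a)⁻¹
      have : g = (FreeGroup.of z.1)⁻¹ := by
        rw [hg, hb]
        apply FreeGroup.toWord_injective
        rw [FreeGroup.toWord_inv, FreeGroup.toWord_of, FreeGroup.toWord_mk]
        rfl
      exact this ▸ hofUU.inv
  have hUUu : UU T₀ u := ⟨i, Or.inl rfl⟩
  have hmul : u * g = FreeGroup.mk Z := by
    have h1 : u = FreeGroup.mk (Z ++ [z]) := by rw [← FreeGroup.mk_toWord (x := u), hZ]
    have h2 : g = FreeGroup.mk (FreeGroup.invRev [z] ++ []) := by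
      rw [hg, invRev_singleton, List.append_nil]
    rw [h1, h2, mk_mul_mk_cancel, List.append_nil]
  have hug : u * g ≠ 1 := by
    intro h0
    have : u = g⁻¹ := by rw [← mul_one u, ← mul_inv_cancel g, ← mul_assoc, h0, one_mul]
    have hn : FreeGroup.norm u = 1 := by
      rw [this, FreeGroup.norm_inv_eq, hg, norm_mk_reduced (by simp [Reduced, List.Chain'])]
      rfl
    omega
  have := normN1 hmin hUUu hUUg hug
  rw [hmul] at this
  have := le_trans this (FreeGroup.norm_mk_le)
  omega

/-! ### Endgame: arranging a minimal tuple into the standard tuple -/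

theorem of_ne_inv (a b : Fin k) : FreeGroup.of a ≠ (FreeGroup.of b)⁻¹ := by
  intro h
  have h2 := congrArg FreeGroup.toWord h
  rw [FreeGroup.toWord_of, FreeGroup.toWord_inv, FreeGroup.toWord_of] at h2
  simp [FreeGroup.invRev] at h2

theorem norm_one_char {x : FreeGroup (Fin k)} (h : FreeGroup.norm x = 1) :
    ∃ a, x = FreeGroup.of a ∨ x = (FreeGroup.of a)⁻¹ := by
  rw [norm_toWord] at h
  obtain ⟨z, hz⟩ := List.length_eq_one_iff.mp h
  refine ⟨z.1, ?_⟩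
  cases hb : z.2
  · refine Or.inr ?_
    apply FreeGroup.toWord_injective
    rw [hz, FreeGroup.toWord_inv, FreeGroup.toWord_of]
    have : z = (z.1, false) := by rw [← hb]
    rw [this]
    simp [FreeGroup.invRev]
  · refine Or.inl ?_
    apply FreeGroup.toWord_injective
    rw [hz, FreeGroup.toWord_of]
    have : z = (z.1, true) := by rw [← hb]
    rw [this]

theorem signfix :
    ∀ (m : ℕ) (T : Fin n → FreeGroup (Fin k)) (f : Fin k → Fin n), Function.Injective f →
    (∀ a, T (f a) = FreeGroup.of a ∨ T (f a) = (FreeGroup.of a)⁻¹) →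
    (∀ i, (∀ a, f a ≠ i) → T i = 1) →
    ((Finset.univ.filter (fun a => T (f a) ≠ FreeGroup.of a)).card ≤ m) →
    ∃ T', NielsenEquiv T T' ∧ (∀ a, T' (f a) = FreeGroup.of a) ∧
      (∀ i, (∀ a, f a ≠ i) → T' i = 1) := by
  intro m
  induction m with
  | zero =>
    intro T f hfinj hT h1 hcard
    refine ⟨T, NE.refl T, fun a => ?_, h1⟩
    by_contra hne
    have hmem : a ∈ Finset.univ.filter (fun a => T (f a) ≠ FreeGroup.of a) := by
      simp [hne]
    rw [Finset.card_eq_zero.mp (Nat.le_zero.mp hcard)] at hmem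
    simp at hmem
  | succ m ih =>
    intro T f hfinj hT h1 hcard
    by_cases hex : ∃ a, T (f a) ≠ FreeGroup.of a
    · obtain ⟨a, ha⟩ := hex
      have hainv : T (f a) = (FreeGroup.of a)⁻¹ := (hT a).resolve_left ha
      set T' := Function.update T (f a) (T (f a))⁻¹ with hTd
      have hstep := ne_inv T (f a)
      have hT'fa : T' (f a) = FreeGroup.of a := by
        rw [hTd, Function.update_self, hainv, inv_inv]
      have hT'2 : ∀ a', T' (f a') = FreeGroup.of a' ∨ T' (f a') = (FreeGroup.of a')⁻¹ := by
        intro a'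
        rcases eq_or_ne a' a with rfl | hne
        · exact Or.inl hT'fa
        · rw [hTd, Function.update_of_ne (fun h => hne (hfinj h))]
          exact hT a'
      have h1' : ∀ i, (∀ a', f a' ≠ i) → T' i = 1 := by
        intro i hi
        rw [hTd, Function.update_of_ne (Ne.symm (hi a))]
        exact h1 i hi
      have hcard' : (Finset.univ.filter fun a' => T' (f a') ≠ FreeGroup.of a').card ≤ m := by
        have hsub : (Finset.univ.filter fun a' => T' (f a') ≠ FreeGroup.of a') ⊆
            (Finset.univ.filter fun a' => T (f a') ≠ FreeGroup.of a').erase a := by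
          intro x hx
          simp only [Finset.mem_filter, Finset.mem_erase, Finset.mem_univ, true_and] at hx ⊢
          have hxa : x ≠ a := by rintro rfl; exact hx hT'fa
          refine ⟨hxa, ?_⟩
          rw [hTd, Function.update_of_ne (fun h => hxa (hfinj h))] at hx
          exact hx
        have hc1 := Finset.card_le_card hsub
        have hmem : a ∈ Finset.univ.filter fun a' => T (f a') ≠ FreeGroup.of a' := by
          simp [ha]
        have hc2 := Finset.card_erase_of_mem hmem
        omega
      obtain ⟨T'', h2, h3, h4⟩ := ih T' f hfinj hT'2 h1' hcard'
      exact ⟨T'', hstep.trans h2, h3, h4⟩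
    · push_neg at hex
      exact ⟨T, NE.refl T, hex, h1⟩

theorem permfix (hkn : k ≤ n) :
    ∀ (m j : ℕ), j + m = k →
    ∀ (T : Fin n → FreeGroup (Fin k)) (f : Fin k → Fin n), Function.Injective f →
    (∀ a, T (f a) = FreeGroup.of a) → (∀ i, (∀ a, f a ≠ i) → T i = 1) →
    (∀ a : Fin k, (a : ℕ) < j → ((f a) : ℕ) = (a : ℕ)) →
    NielsenEquiv T
      (fun i => if h : (i : ℕ) < k then FreeGroup.of (⟨(i : ℕ), h⟩ : Fin k) else 1) := by
  intro m
  induction m with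
  | zero =>
    intro j hjm T f hfinj hT h1 hprev
    have hTeq : T = (fun i : Fin n => if h : (i : ℕ) < k then
        FreeGroup.of (⟨(i : ℕ), h⟩ : Fin k) else 1) := by
      funext i
      by_cases h : (i : ℕ) < k
      · rw [dif_pos h]
        have hfa : f ⟨(i : ℕ), h⟩ = i := Fin.ext (by rw [hprev ⟨(i : ℕ), h⟩ (by omega)])
        have h2 := hT ⟨(i : ℕ), h⟩
        rwa [hfa] at h2
      · rw [dif_neg h]
        refine h1 i (fun a hfa => ?_)
        have := hprev a (by omega)
        rw [hfa] at this
        omega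
    exact hTeq ▸ NE.refl T
  | succ m ih =>
    intro j hjm T f hfinj hT h1 hprev
    have hjk : j < k := by omega
    set b : Fin k := ⟨j, hjk⟩ with hb
    set cb : Fin n := ⟨j, by omega⟩ with hcb
    have hbj : (b : ℕ) = j := rfl
    have hcbj : (cb : ℕ) = j := rfl
    by_cases hq : f b = cb
    · refine ih (j + 1) (by omega) T f hfinj hT h1 ?_
      intro a ha
      rcases Nat.lt_or_ge (a : ℕ) j with h' | h'
      · exact hprev a h'
      · have hab : a = b := Fin.ext (show (a : ℕ) = (b : ℕ) by omega)
        rw [hab, hq]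
    · have hstep := ne_swap T cb (f b) (fun h => hq h.symm)
      refine hstep.trans (ih (j + 1) (by omega) (T ∘ (Equiv.swap cb (f b)))
        ((⇑(Equiv.swap cb (f b))) ∘ f) ((Equiv.swap cb (f b)).injective.comp hfinj)
        ?_ ?_ ?_)
      · intro a
        simp only [Function.comp_apply, Equiv.swap_apply_self]
        exact hT a
      · intro i hi
        simp only [Function.comp_apply]
        refine h1 _ (fun a heq => ?_)
        exact hi a (by simp only [Function.comp_apply, heq, Equiv.swap_apply_self])
      · intro a ha
        simp only [Function.comp_apply]
        rcases Nat.lt_or_ge (a : ℕ) j with h' | h'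
        · have hne1 : f a ≠ cb := by
            intro h0
            have h3 := hprev a h'
            rw [h0, hcbj] at h3
            omega
          have hne2 : f a ≠ f b := by
            intro h0
            have hab2 : a = b := hfinj h0
            rw [hab2, hbj] at h'
            omega
          rw [Equiv.swap_apply_of_ne_of_ne hne1 hne2]
          exact hprev a h'
        · have hab : a = b := Fin.ext (show (a : ℕ) = (b : ℕ) by omega)
          rw [hab, Equiv.swap_apply_right]

end NielsenProof

/-- **Nielsen's theorem.** Every generating `n`-tuple of the free group on `x₁, …, x_k`
satisfies `n ≥ k` and is Nielsen equivalent to `(x₁, …, x_k, 1, …, 1)`.  In particular,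
any two generating `n`-tuples of a free group are Nielsen equivalent. -/
theorem nielsen_free_group (k : ℕ) {n : ℕ} :
    (∀ T : Fin n → FreeGroup (Fin k),
      Subgroup.closure (Set.range T) = ⊤ →
        k ≤ n ∧
        NielsenEquiv T
          (fun i => if h : (i : ℕ) < k then FreeGroup.of (⟨(i : ℕ), h⟩ : Fin k) else 1)) ∧
    (∀ T T' : Fin n → FreeGroup (Fin k),
      Subgroup.closure (Set.range T) = ⊤ → Subgroup.closure (Set.range T') = ⊤ →
        NielsenEquiv T T') := by
  classical
  have main : ∀ T : Fin n → FreeGroup (Fin k), Subgroup.closure (Set.range T) = ⊤ →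
      k ≤ n ∧ NielsenEquiv T
        (fun i => if h : (i : ℕ) < k then FreeGroup.of (⟨(i : ℕ), h⟩ : Fin k) else 1) := by
    intro T hgen
    obtain ⟨T₀, hT₀S, hminS⟩ := (NielsenProof.mlt_wf).has_min
      {T' | NielsenEquiv T T'} ⟨T, NielsenProof.NE.refl T⟩
    have hmin : NielsenProof.IsMin T₀ := fun T' h hlt =>
      hminS T' (Relation.ReflTransGen.trans hT₀S h) hlt
    have hgen₀ : Subgroup.closure (Set.range T₀) = ⊤ := by
      rw [NielsenProof.NE.closure_eq hT₀S, hgen]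
    choose f hf using fun a => NielsenProof.factD hmin hgen₀ a
    have hfinj : Function.Injective f := by
      intro a a' h
      have h1 := hf a
      have h2 := hf a'
      rw [h] at h1
      rcases h1 with h1 | h1 <;> rcases h2 with h2 | h2
      · exact FreeGroup.of_injective (h1.symm.trans h2)
      · exact absurd (h1.symm.trans h2) (NielsenProof.of_ne_inv a a')
      · exact absurd (h2.symm.trans h1) (NielsenProof.of_ne_inv a' a)
      · exact FreeGroup.of_injective (inv_injective (h1.symm.trans h2))
    have hkn : k ≤ n := by simpa using Fintype.card_le_of_injective f hfinj
    have hother : ∀ i, (∀ a, f a ≠ i) → T₀ i = 1 := by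
      intro i hi
      have hle := NielsenProof.factE hmin hgen₀ i
      rcases Nat.le_one_iff_eq_zero_or_eq_one.mp hle with h0 | h1
      · exact FreeGroup.norm_eq_zero.mp h0
      · exfalso
        obtain ⟨a, ha⟩ := NielsenProof.norm_one_char h1
        have hine : i ≠ f a := fun h => (hi a) h.symm
        have hne1 : T₀ i ≠ 1 := by
          intro h0
          rw [h0] at h1
          simp at h1
        obtain ⟨hB1, hB2⟩ := NielsenProof.factB hmin hine hne1
        rcases ha with ha | ha <;> rcases hf a with hfa | hfa
        · exact hB1 (by rw [ha, hfa])
        · exact hB2 (by rw [ha, hfa, inv_inv])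
        · exact hB2 (by rw [ha, hfa])
        · exact hB1 (by rw [ha, hfa])
    obtain ⟨T₁, hT₁, hT₁good, hT₁other⟩ := NielsenProof.signfix
      ((Finset.univ.filter (fun a => T₀ (f a) ≠ FreeGroup.of a)).card) T₀ f hfinj hf
      hother le_rfl
    have hperm := NielsenProof.permfix hkn k 0 (by omega) T₁ f hfinj hT₁good hT₁other
      (fun a ha => absurd ha (by omega))
    exact ⟨hkn, NielsenProof.NE.trans (NielsenProof.NE.trans hT₀S hT₁) hperm⟩
  refine ⟨fun T h => main T h, fun T T' h h' => ?_⟩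
  exact NielsenProof.NE.trans ((main T h).2) (NielsenProof.NE.symm ((main T' h').2))
end

section
/- Let g ≥ 0, r ≥ 0 and p₁,…,p_r ≥ 2 be integers with g ≥ 1 or r ≥ 4, and let G = ⟨a₁,…,a_{2g}, s₁,…,s_r | s₁^{p₁},…,s_r^{p_r}, [a₁,a₂]⋯[a_{2g−1},a_{2g}]·s₁⋯s_r⟩ be the fundamental group of a sufficiently large closed orientable 2-orbifold of genus g with cone points of orders p₁,…,p_r. Then G is not isomorphic to any free product of a family of cyclic groups. -/
universe u v

open scoped commutatorElement

/-- The relator `[a₁,a₂]⋯[a_{2g−1},a_{2g}] · s₁⋯s_r` in the free group on the generators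
`a₁,…,a_{2g}` (left summand) and `s₁,…,s_r` (right summand). -/
def closedOrbRelator (g r : ℕ) : FreeGroup (Fin (2 * g) ⊕ Fin r) :=
  (List.ofFn fun j : Fin g =>
      ⁅(FreeGroup.of (Sum.inl ⟨2 * (j : ℕ), by have := j.isLt; omega⟩) :
          FreeGroup (Fin (2 * g) ⊕ Fin r)),
        FreeGroup.of (Sum.inl ⟨2 * (j : ℕ) + 1, by have := j.isLt; omega⟩)⁆).prod *
    (List.ofFn fun i : Fin r => FreeGroup.of (Sum.inr i)).prod

/-- The relations `s₁^{p₁}, …, s_r^{p_r}` and `[a₁,a₂]⋯[a_{2g−1},a_{2g}]·s₁⋯s_r`. -/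
def closedOrbRels (g r : ℕ) (p : Fin r → ℕ) : Set (FreeGroup (Fin (2 * g) ⊕ Fin r)) :=
  {w | (∃ i : Fin r, w = FreeGroup.of (Sum.inr i) ^ p i) ∨ w = closedOrbRelator g r}

universe w

namespace OrbifoldAux


/-- ℚ-valued 2-cocycle (trivial action). -/
def IsCocycle {H : Type*} [Group H] (f : H → H → ℚ) : Prop :=
  ∀ a b c : H, f a b + f (a * b) c = f b c + f a (b * c)

/-- coboundary -/
def IsCoboundary {H : Type*} [Group H] (f : H → H → ℚ) : Prop :=
  ∃ u : H → ℚ, ∀ a b : H, f a b = u a + u b - u (a * b)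

/-- normalized cocycle -/
def NCocycle {H : Type*} [Group H] (f : H → H → ℚ) : Prop :=
  IsCocycle f ∧ f 1 1 = 0

section CE

variable {C : Type u} [Group C]

/-- central extension carrier -/
@[ext]
structure CE (f : C → C → ℚ) where
  q : ℚ
  g : C

variable (f : C → C → ℚ) [hf : Fact (NCocycle f)]

theorem f_one_left (b : C) : f 1 b = 0 := by
  have h := hf.out.1 1 1 b
  simp only [one_mul] at h
  have h11 := hf.out.2
  linarith

theorem f_one_right (a : C) : f a 1 = 0 := by
  have h := hf.out.1 a 1 1
  simp only [mul_one] at h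
  have h11 := hf.out.2
  have h1b := f_one_left f (1 : C)
  linarith

theorem f_inv_comm (a : C) : f a a⁻¹ = f a⁻¹ a := by
  have h := hf.out.1 a a⁻¹ a
  rw [mul_inv_cancel, inv_mul_cancel] at h
  have h1 := f_one_left f a
  have h2 := f_one_right f a
  linarith

instance ceGroup : Group (CE f) where
  mul x y := ⟨x.q + y.q + f x.g y.g, x.g * y.g⟩
  one := ⟨0, 1⟩
  inv x := ⟨-x.q - f x.g x.g⁻¹, x.g⁻¹⟩
  mul_assoc x y z := by
    have h := hf.out.1 x.g y.g z.g
    ext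
    · show x.q + y.q + f x.g y.g + z.q + f (x.g * y.g) z.g
        = x.q + (y.q + z.q + f y.g z.g) + f x.g (y.g * z.g)
      linarith
    · exact mul_assoc _ _ _
  one_mul x := by
    ext
    · show 0 + x.q + f 1 x.g = x.q
      rw [f_one_left f x.g]; ring
    · exact one_mul _
  mul_one x := by
    ext
    · show x.q + 0 + f x.g 1 = x.q
      rw [f_one_right f x.g]; ring
    · exact mul_one _
  inv_mul_cancel x := by
    show (⟨-x.q - f x.g x.g⁻¹ + x.q + f x.g⁻¹ x.g, x.g⁻¹ * x.g⟩ : CE f) = ⟨0, 1⟩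
    rw [f_inv_comm f x.g]
    ext
    · show -x.q - f x.g⁻¹ x.g + x.q + f x.g⁻¹ x.g = 0
      ring
    · exact inv_mul_cancel _

@[simp] theorem ce_mul_def (x y : CE f) :
    x * y = ⟨x.q + y.q + f x.g y.g, x.g * y.g⟩ := rfl

@[simp] theorem ce_one_def : (1 : CE f) = ⟨0, 1⟩ := rfl

/-- projection -/
def ceProj : CE f →* C where
  toFun x := x.g
  map_one' := rfl
  map_mul' _ _ := rfl

theorem ce_central_mul (q : ℚ) (x : CE f) :
    (⟨q, 1⟩ : CE f) * x = ⟨q + x.q, x.g⟩ := by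
  rw [ce_mul_def, f_one_left f x.g, one_mul]
  ext <;> simp <;> ring

theorem ce_central_pow (q : ℚ) (n : ℕ) :
    (⟨q, 1⟩ : CE f) ^ n = ⟨n * q, 1⟩ := by
  induction n with
  | zero => simp
  | succ n ih =>
    rw [pow_succ, ih, ce_mul_def, f_one_right f 1]
    ext <;> simp <;> ring

theorem ce_commute_central (q : ℚ) (x : CE f) : Commute (⟨q, 1⟩ : CE f) x := by
  show _ = _
  rw [ce_central_mul, ce_mul_def, f_one_right f]
  ext <;> simp <;> ring

/-- lifting a cyclic group into the central extension -/
theorem exists_hom_of_cyclic {Z : Type v} [Group Z] (d : Z)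
    (hd : ∀ z : Z, ∃ m : ℤ, d ^ m = z) (j : Z →* C) :
    ∃ s : Z →* CE f, (ceProj f).comp s = j := by
  classical
  -- find a lift t of j d with : ∀ m : ℤ, d ^ m = 1 → t ^ m = 1
  obtain ⟨t, htp, ht⟩ : ∃ t : CE f, (ceProj f) t = j d ∧ ∀ m : ℤ, d ^ m = 1 → t ^ m = 1 := by
    by_cases hfin : ∃ n : ℕ, 0 < n ∧ d ^ (n : ℤ) = 1
    · obtain ⟨n₀, ⟨hn₀pos, hdn₀⟩, hmin⟩ :
          ∃ n₀ : ℕ, (0 < n₀ ∧ d ^ (n₀ : ℤ) = 1) ∧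
            ∀ m : ℕ, m < n₀ → ¬(0 < m ∧ d ^ (m : ℤ) = 1) :=
        ⟨Nat.find hfin, Nat.find_spec hfin, fun m hm => Nat.find_min hfin hm⟩
      have hdvd : ∀ m : ℤ, d ^ m = 1 → (n₀ : ℤ) ∣ m := by
        intro m hm
        have hne : (n₀ : ℤ) ≠ 0 := by positivity
        have h0 : 0 ≤ m % (n₀ : ℤ) := Int.emod_nonneg m hne
        have h1 : m % (n₀ : ℤ) < (n₀ : ℤ) := Int.emod_lt_of_pos m (by positivity)
        have hrest : d ^ (m % (n₀ : ℤ)) = 1 := by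
          have hdef : m % (n₀ : ℤ) = m - (n₀ : ℤ) * (m / (n₀ : ℤ)) := by
            rw [Int.emod_def]
          rw [hdef, zpow_sub, hm, zpow_mul, hdn₀, one_zpow, one_mul, inv_one]
        by_contra hnd
        have hne0 : m % (n₀ : ℤ) ≠ 0 := by
          intro h; exact hnd (Int.dvd_of_emod_eq_zero h)
        have hlt : (m % (n₀ : ℤ)).toNat < n₀ := by omega
        apply hmin _ hlt
        constructor
        · omega
        · rwa [Int.toNat_of_nonneg h0]
      set t₀ : CE f := ⟨0, j d⟩ with ht₀
      have hproj : (ceProj f) (t₀ ^ (n₀ : ℕ)) = 1 := by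
        rw [map_pow]
        show (j d) ^ (n₀ : ℕ) = 1
        rw [← map_pow, ← zpow_natCast, hdn₀, map_one]
      set ξ := (t₀ ^ (n₀ : ℕ)).q with hξ
      have ht₀n : t₀ ^ (n₀ : ℕ) = ⟨ξ, 1⟩ := by
        ext
        · rfl
        · exact hproj
      refine ⟨(⟨-ξ / n₀, 1⟩ : CE f) * t₀, ?_, ?_⟩
      · show ((⟨-ξ / n₀, 1⟩ : CE f) * t₀).g = j d
        rw [ce_central_mul]
      · have htn : ((⟨-ξ / n₀, 1⟩ : CE f) * t₀) ^ (n₀ : ℕ) = 1 := by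
          rw [(ce_commute_central f (-ξ / n₀) t₀).mul_pow, ce_central_pow, ht₀n,
            ce_central_mul]
          have hq : (n₀ : ℚ) * (-ξ / n₀) + ξ = 0 := by
            have : (n₀ : ℚ) ≠ 0 := by positivity
            field_simp
            ring
          rw [hq]
          rfl
        intro m hm
        obtain ⟨k, rfl⟩ := hdvd m hm
        rw [zpow_mul]
        rw [← zpow_natCast _ n₀] at htn
        rw [htn, one_zpow]
    · refine ⟨⟨0, j d⟩, rfl, ?_⟩
      intro m hm
      have hm0 : m = 0 := by
        by_contra hm0
        apply hfin
        refine ⟨m.natAbs, by omega, ?_⟩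
        rcases Int.natAbs_eq m with h | h
        · rw [← h, hm]
        · rw [← neg_neg ((m.natAbs : ℤ)), ← h, zpow_neg, hm, inv_one]
      rw [hm0, zpow_zero]
  -- welldefinedness
  have hwd : ∀ m m' : ℤ, d ^ m = d ^ m' → t ^ m = t ^ m' := by
    intro m m' h
    have h1 : d ^ (m - m') = 1 := by
      rw [zpow_sub, h, mul_inv_cancel]
    have h2 := ht _ h1
    rw [zpow_sub] at h2
    have h3 := mul_eq_one_iff_eq_inv.mp h2
    rw [h3, inv_inv]
  -- define the hom
  refine ⟨⟨⟨fun z => t ^ (hd z).choose, ?_⟩, ?_⟩, ?_⟩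
  · have h1 : d ^ (hd (1 : Z)).choose = 1 := (hd 1).choose_spec
    rw [ht _ h1]
  · intro x y
    have hx := (hd x).choose_spec
    have hy := (hd y).choose_spec
    have hxy := (hd (x * y)).choose_spec
    simp only
    rw [← zpow_add]
    apply hwd
    rw [hxy, zpow_add, hx, hy]
  · ext z
    have hz := (hd z).choose_spec
    show (ceProj f) (t ^ (hd z).choose) = j z
    rw [map_zpow, htp, ← map_zpow, hz]

end CE


section Transport

open Monoid

/-- every ℚ-cocycle on a free product of cyclic groups is a coboundary -/
theorem coprodI_isCoboundary {κ : Type u} {D : κ → Type v} [∀ k, Group (D k)]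
    (hcyc : ∀ k, ∃ d : D k, Subgroup.zpowers d = ⊤)
    (f : CoprodI D → CoprodI D → ℚ) (hco : IsCocycle f) : IsCoboundary f := by
  classical
  set f' : CoprodI D → CoprodI D → ℚ := fun a b => f a b - f 1 1 with hf'
  have hco' : NCocycle f' := by
    constructor
    · intro a b c
      have := hco a b c
      simp only [hf']
      linarith
    · simp [hf']
  haveI : Fact (NCocycle f') := ⟨hco'⟩
  -- lift each cyclic factor
  have hsk : ∀ k : κ, ∃ s : D k →* CE f', (ceProj f').comp s = CoprodI.of := by
    intro k
    obtain ⟨d, hd⟩ := hcyc k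
    apply exists_hom_of_cyclic f' d
    intro z
    have : z ∈ Subgroup.zpowers d := by rw [hd]; trivial
    exact Subgroup.mem_zpowers_iff.mp this
  choose s hs using hsk
  set σ : CoprodI D →* CE f' := CoprodI.lift s with hσ
  have hπσ : (ceProj f').comp σ = MonoidHom.id (CoprodI D) := by
    apply CoprodI.ext_hom
    intro k
    rw [hσ, MonoidHom.comp_assoc, CoprodI.lift_comp_of, hs]
    rfl
  have hg : ∀ a : CoprodI D, (σ a).g = a := by
    intro a
    have := DFunLike.congr_fun hπσ a
    exact this
  refine ⟨fun a => -(σ a).q + f 1 1, ?_⟩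
  intro a b
  have hmul : σ (a * b) = σ a * σ b := map_mul σ a b
  have hq : (σ (a * b)).q = (σ a).q + (σ b).q + f' (σ a).g (σ b).g := by
    rw [hmul]; rfl
  rw [hg, hg] at hq
  simp only [hf'] at hq
  show f a b = -(σ a).q + f 1 1 + (-(σ b).q + f 1 1) - (-(σ (a * b)).q + f 1 1)
  linarith

/-- transport coboundary property along a group isomorphism -/
theorem isCoboundary_of_mulEquiv {G H : Type*} [Group G] [Group H] (e : G ≃* H)
    (hH : ∀ f : H → H → ℚ, IsCocycle f → IsCoboundary f)
    (f : G → G → ℚ) (hf : IsCocycle f) : IsCoboundary f := by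
  set fH : H → H → ℚ := fun x y => f (e.symm x) (e.symm y) with hfH
  have hcoH : IsCocycle fH := by
    intro a b c
    simp only [hfH, map_mul]
    exact hf _ _ _
  obtain ⟨u, hu⟩ := hH fH hcoH
  refine ⟨fun a => u (e a), ?_⟩
  intro a b
  have := hu (e a) (e b)
  simp only [hfH, MulEquiv.symm_apply_apply, ← map_mul] at this
  exact this

end Transport


section Main

open Monoid Subgroup

set_option maxHeartbeats 1000000 in
theorem no_iso (g r : ℕ) (p : Fin r → ℕ) (hp : ∀ i, 2 ≤ p i)
    {E : Type w} [Group E] (η : FreeGroup (Fin (2 * g) ⊕ Fin r) →* E) (z : E)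
    (hcent : ∀ e : E, Commute z e) (hzinf : ∀ m : ℤ, z ^ m = 1 → m = 0)
    (hpow : ∀ i, η (FreeGroup.of (Sum.inr i)) ^ p i = 1)
    (hwrel : η (closedOrbRelator g r) = z)
    (κ : Type u) (D : κ → Type v) [∀ k, Group (D k)]
    (hcyc : ∀ k, ∃ d : D k, Subgroup.zpowers d = ⊤) :
    IsEmpty (PresentedGroup (closedOrbRels g r p) ≃* Monoid.CoprodI D) := by
  classical
  constructor
  intro e
  set rels := closedOrbRels g r p with hrels
  set N := Subgroup.normalClosure rels with hN
  -- conjugation invariance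
  have hconj : ∀ (y x : FreeGroup (Fin (2 * g) ⊕ Fin r)), η x ∈ Subgroup.zpowers z →
      η (y * x * y⁻¹) = η x := by
    intro y x hx
    obtain ⟨m, hm⟩ := Subgroup.mem_zpowers_iff.mp hx
    have hcz : η y * z ^ m = z ^ m * η y := ((hcent (η y)).zpow_left m).symm.eq
    rw [map_mul, map_mul, map_inv, ← hm, hcz, mul_assoc, mul_inv_cancel, mul_one]
  -- η maps N into the powers of z
  have hnormal : (Subgroup.comap η (Subgroup.zpowers z)).Normal := by
    constructor
    intro n hn gg
    simp only [Subgroup.mem_comap] at hn ⊢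
    rw [hconj gg n hn]
    exact hn
  have hsub : rels ⊆ ↑(Subgroup.comap η (Subgroup.zpowers z)) := by
    intro w hw
    simp only [Subgroup.mem_comap, SetLike.mem_coe]
    rcases hw with ⟨i, rfl⟩ | rfl
    · rw [map_pow, hpow]
      exact one_mem _
    · rw [hwrel]
      exact Subgroup.mem_zpowers z
  have hNz : ∀ x ∈ N, η x ∈ Subgroup.zpowers z := by
    intro x hx
    have := Subgroup.normalClosure_le_normal hsub hx
    simpa [Subgroup.mem_comap] using this
  -- the logarithm
  set lam : E → ℚ := fun x => if h : ∃ m : ℤ, z ^ m = x then ((h.choose : ℤ) : ℚ) else 0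
    with hlam
  have hlamz : ∀ m : ℤ, lam (z ^ m) = (m : ℚ) := by
    intro m
    have hex : ∃ k : ℤ, z ^ k = z ^ m := ⟨m, rfl⟩
    have hch := hex.choose_spec
    have : hex.choose = m := by
      have h1 : z ^ (hex.choose - m) = 1 := by
        rw [zpow_sub, hch, mul_inv_cancel]
      have := hzinf _ h1
      omega
    simp only [hlam, dif_pos hex, this]
  have hlam_one : lam 1 = 0 := by
    have := hlamz 0
    rwa [zpow_zero] at this
  have hlam_mul : ∀ a b : E, a ∈ Subgroup.zpowers z → b ∈ Subgroup.zpowers z →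
      lam (a * b) = lam a + lam b := by
    intro a b ha hb
    obtain ⟨ma, rfl⟩ := Subgroup.mem_zpowers_iff.mp ha
    obtain ⟨mb, rfl⟩ := Subgroup.mem_zpowers_iff.mp hb
    rw [← zpow_add, hlamz, hlamz, hlamz]
    push_cast
    ring
  -- the section of the presentation
  set mkh := PresentedGroup.mk rels with hmkh
  set out : PresentedGroup rels → FreeGroup (Fin (2 * g) ⊕ Fin r) :=
    Function.surjInv (PresentedGroup.mk_surjective rels) with hout_def
  have hout : ∀ a, mkh (out a) = a := fun a =>
    Function.surjInv_eq (PresentedGroup.mk_surjective rels) a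
  have hmem : ∀ x : FreeGroup (Fin (2 * g) ⊕ Fin r), mkh x = 1 → x ∈ N := by
    intro x hx
    exact (QuotientGroup.eq_one_iff x).mp hx
  have hmem' : ∀ x : FreeGroup (Fin (2 * g) ⊕ Fin r), x ∈ N → mkh x = 1 := by
    intro x hx
    exact (QuotientGroup.eq_one_iff x).mpr hx
  -- the cocycle
  set c : PresentedGroup rels → PresentedGroup rels → FreeGroup (Fin (2 * g) ⊕ Fin r) :=
    fun a b => out a * out b * (out (a * b))⁻¹ with hc
  have hcN : ∀ a b, c a b ∈ N := by
    intro a b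
    apply hmem
    simp only [hc, map_mul, map_inv, hout]
    group
  set f₀ : PresentedGroup rels → PresentedGroup rels → ℚ :=
    fun a b => lam (η (c a b)) with hf₀
  have hcocycle : IsCocycle f₀ := by
    intro a b c'
    have key : c a b * c (a * b) c' = (out a * c b c' * (out a)⁻¹) * (c a (b * c')) := by
      simp only [hc, mul_assoc, mul_assoc]
      group
    have hL : f₀ a b + f₀ (a * b) c' = lam (η (c a b * c (a * b) c')) := by
      rw [map_mul, hlam_mul _ _ (hNz _ (hcN a b)) (hNz _ (hcN (a * b) c'))]
    have hR : f₀ b c' + f₀ a (b * c') = lam (η (c a b * c (a * b) c')) := by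
      rw [key, map_mul, hconj (out a) _ (hNz _ (hcN b c')),
        hlam_mul _ _ (hNz _ (hcN b c')) (hNz _ (hcN a (b * c')))]
    rw [hL, hR]
  -- it must be a coboundary
  have hcob : IsCoboundary f₀ :=
    isCoboundary_of_mulEquiv e (fun f hf => coprodI_isCoboundary hcyc f hf) f₀ hcocycle
  obtain ⟨u, hu⟩ := hcob
  -- the extension of the logarithm to the whole free group
  set Λ : FreeGroup (Fin (2 * g) ⊕ Fin r) → ℚ :=
    fun x => lam (η (x * (out (mkh x))⁻¹)) + u (mkh x) with hΛ
  have hnN : ∀ x, x * (out (mkh x))⁻¹ ∈ N := by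
    intro x
    apply hmem
    simp only [map_mul, map_inv, hout]
    group
  have hΛmul : ∀ x y, Λ (x * y) = Λ x + Λ y := by
    intro x y
    have hmkxy : mkh (x * y) = mkh x * mkh y := map_mul mkh x y
    have key : x * y * (out (mkh x * mkh y))⁻¹ =
        (x * (out (mkh x))⁻¹) * (out (mkh x) * (y * (out (mkh y))⁻¹) * (out (mkh x))⁻¹) *
          (c (mkh x) (mkh y)) := by
      simp only [hc]
      group
    have hη : η (x * y * (out (mkh x * mkh y))⁻¹) =
        η (x * (out (mkh x))⁻¹) * η (y * (out (mkh y))⁻¹) * η (c (mkh x) (mkh y)) := by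
      rw [key, map_mul, map_mul, hconj (out (mkh x)) _ (hNz _ (hnN y))]
    have hmm : lam (η (x * y * (out (mkh x * mkh y))⁻¹)) =
        lam (η (x * (out (mkh x))⁻¹)) + lam (η (y * (out (mkh y))⁻¹)) + f₀ (mkh x) (mkh y) := by
      rw [hη, hlam_mul _ _ (mul_mem (hNz _ (hnN x)) (hNz _ (hnN y))) (hNz _ (hcN _ _)),
        hlam_mul _ _ (hNz _ (hnN x)) (hNz _ (hnN y))]
    have hueq := hu (mkh x) (mkh y)
    simp only [hΛ, hmkxy, hmm]
    linarith
  have hΛone : Λ 1 = 0 := by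
    have := hΛmul 1 1
    rw [one_mul] at this
    linarith
  have hΛN : ∀ x ∈ N, Λ x = lam (η x) := by
    intro x hx
    have hmk1 : mkh x = 1 := hmem' x hx
    have hout1N : (out (1 : PresentedGroup rels))⁻¹ ∈ N := by
      apply inv_mem
      apply hmem
      rw [hout]
    have hsplit : lam (η (x * (out (1 : PresentedGroup rels))⁻¹)) =
        lam (η x) + lam (η (out (1 : PresentedGroup rels))⁻¹) := by
      rw [map_mul, hlam_mul _ _ (hNz _ hx) (hNz _ hout1N)]
    have hx1 : Λ x = lam (η x) + (lam (η (out (1 : PresentedGroup rels))⁻¹) + u 1) := by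
      simp only [hΛ, hmk1, hsplit]
      ring
    have h1 : Λ 1 = lam (η (out (1 : PresentedGroup rels))⁻¹) + u 1 := by
      simp only [hΛ, map_one, one_mul, hlam]
    rw [hx1, ← h1, hΛone, add_zero]
  have hΛinv : ∀ x, Λ x⁻¹ = -Λ x := by
    intro x
    have := hΛmul x x⁻¹
    rw [mul_inv_cancel, hΛone] at this
    linarith
  have hΛpow : ∀ (x) (n : ℕ), Λ (x ^ n) = n * Λ x := by
    intro x n
    induction n with
    | zero => simpa using hΛone
    | succ n ih =>
      rw [pow_succ, hΛmul, ih]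
      push_cast
      ring
  have hΛs : ∀ i : Fin r, Λ (FreeGroup.of (Sum.inr i) : FreeGroup (Fin (2 * g) ⊕ Fin r)) = 0 := by
    intro i
    have hmN : (FreeGroup.of (Sum.inr i) : FreeGroup (Fin (2 * g) ⊕ Fin r)) ^ p i ∈ N :=
      Subgroup.subset_normalClosure (Or.inl ⟨i, rfl⟩)
    have h1 : Λ ((FreeGroup.of (Sum.inr i) : FreeGroup (Fin (2 * g) ⊕ Fin r)) ^ p i) = 0 := by
      rw [hΛN _ hmN, map_pow, hpow, hlam_one]
    rw [hΛpow] at h1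
    have hpne : ((p i : ℚ)) ≠ 0 := by
      have := hp i
      positivity
    exact (mul_eq_zero.mp h1).resolve_left hpne
  have hΛcomm : ∀ x y : FreeGroup (Fin (2 * g) ⊕ Fin r), Λ ⁅x, y⁆ = 0 := by
    intro x y
    rw [commutatorElement_def, hΛmul, hΛmul, hΛmul, hΛinv, hΛinv]
    ring
  have hΛlist : ∀ l : List (FreeGroup (Fin (2 * g) ⊕ Fin r)),
      (∀ x ∈ l, Λ x = 0) → Λ l.prod = 0 := by
    intro l
    induction l with
    | nil => intro _; simpa using hΛone
    | cons hd tl ih =>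
      intro hmem0
      rw [List.prod_cons, hΛmul, hmem0 hd List.mem_cons_self, ih fun x hx =>
        hmem0 x (List.mem_cons_of_mem hd hx), add_zero]
  -- Λ of the relator is 0
  have hrel0 : Λ (closedOrbRelator g r) = 0 := by
    rw [closedOrbRelator, hΛmul, hΛlist _ ?_, hΛlist _ ?_, add_zero]
    · intro x hx
      obtain ⟨i, rfl⟩ := List.mem_ofFn.mp hx
      exact hΛs i
    · intro x hx
      obtain ⟨j, rfl⟩ := List.mem_ofFn.mp hx
      exact hΛcomm _ _
  -- but Λ of the relator is 1
  have hrel1 : Λ (closedOrbRelator g r) = 1 := by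
    have hmN : closedOrbRelator g r ∈ N := Subgroup.subset_normalClosure (Or.inr rfl)
    rw [hΛN _ hmN, hwrel]
    have := hlamz 1
    rwa [zpow_one] at this
  rw [hrel0] at hrel1
  norm_num at hrel1

end Main

section Heis

/-- integer Heisenberg group -/
@[ext]
structure Heis where
  a : ℤ
  b : ℤ
  c : ℤ

instance : Mul Heis := ⟨fun x y => ⟨x.a + y.a, x.b + y.b, x.c + y.c + x.a * y.b⟩⟩
instance : One Heis := ⟨⟨0, 0, 0⟩⟩
instance : Inv Heis := ⟨fun x => ⟨-x.a, -x.b, x.a * x.b - x.c⟩⟩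

theorem heis_mul_def (x y : Heis) :
    x * y = ⟨x.a + y.a, x.b + y.b, x.c + y.c + x.a * y.b⟩ := rfl

theorem heis_one_def : (1 : Heis) = ⟨0, 0, 0⟩ := rfl

theorem heis_inv_def (x : Heis) : x⁻¹ = ⟨-x.a, -x.b, x.a * x.b - x.c⟩ := rfl

instance : Group Heis where
  mul_assoc x y z := by
    simp only [heis_mul_def]
    ext <;> dsimp <;> ring
  one_mul x := by
    simp only [heis_one_def, heis_mul_def]
    ext <;> dsimp <;> ring
  mul_one x := by
    simp only [heis_one_def, heis_mul_def]
    ext <;> dsimp <;> ring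
  inv_mul_cancel x := by
    simp only [heis_inv_def, heis_mul_def, heis_one_def]
    ext <;> dsimp <;> ring

def heisX : Heis := ⟨1, 0, 0⟩
def heisY : Heis := ⟨0, 1, 0⟩
def heisZ : Heis := ⟨0, 0, 1⟩

theorem heisZ_comm : ∀ e : Heis, Commute heisZ e := by
  intro e
  show heisZ * e = e * heisZ
  rw [heis_mul_def, heis_mul_def]
  ext <;> simp [heisZ] <;> ring

theorem heisZ_pow (n : ℕ) : heisZ ^ n = ⟨0, 0, (n : ℤ)⟩ := by
  induction n with
  | zero => rfl
  | succ n ih =>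
    rw [pow_succ, ih, heis_mul_def]
    ext <;> simp [heisZ] <;> push_cast <;> ring

theorem heisZ_zpow (m : ℤ) : heisZ ^ m = ⟨0, 0, m⟩ := by
  have hnat : ∀ n : ℕ, heisZ ^ (n : ℤ) = ⟨0, 0, (n : ℤ)⟩ := by
    intro n
    rw [zpow_natCast, heisZ_pow]
  rcases le_or_gt 0 m with hm | hm
  · obtain ⟨n, rfl⟩ : ∃ n : ℕ, m = (n : ℤ) := ⟨m.toNat, by omega⟩
    exact hnat n
  · obtain ⟨n, rfl⟩ : ∃ n : ℕ, m = -(n : ℤ) := ⟨(-m).toNat, by omega⟩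
    rw [zpow_neg, hnat, heis_inv_def]
    ext <;> simp

theorem heisZ_inf : ∀ m : ℤ, heisZ ^ m = 1 → m = 0 := by
  intro m hm
  rw [heisZ_zpow, heis_one_def] at hm
  exact congrArg Heis.c hm

theorem heis_commXY : ⁅heisX, heisY⁆ = heisZ := by
  rw [commutatorElement_def]
  show heisX * heisY * heisX⁻¹ * heisY⁻¹ = heisZ
  rw [heis_inv_def, heis_inv_def, heis_mul_def, heis_mul_def, heis_mul_def]
  ext <;> simp [heisX, heisY, heisZ]

/-- generator map for the `g ≥ 1` case -/
def heisGen (g r : ℕ) : Fin (2 * g) ⊕ Fin r → Heis := fun x =>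
  match x with
  | Sum.inl a => if (a : ℕ) = 0 then heisX else if (a : ℕ) = 1 then heisY else 1
  | Sum.inr _ => 1

theorem heis_rel (g r : ℕ) (hg : 1 ≤ g) :
    (FreeGroup.lift (heisGen g r)) (closedOrbRelator g r) = heisZ := by
  obtain ⟨g', rfl⟩ : ∃ g', g = g' + 1 := ⟨g - 1, by omega⟩
  set η := FreeGroup.lift (heisGen (g' + 1) r) with hη
  rw [closedOrbRelator, map_mul, map_list_prod, map_list_prod]
  have h2 : (List.map (⇑η) (List.ofFn fun i : Fin r =>
      (FreeGroup.of (Sum.inr i) : FreeGroup (Fin (2 * (g' + 1)) ⊕ Fin r)))).prod = 1 := by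
    apply List.prod_eq_one
    intro x hx
    simp only [List.mem_map] at hx
    obtain ⟨y, hy, rfl⟩ := hx
    obtain ⟨i, rfl⟩ := List.mem_ofFn.mp hy
    rw [hη, FreeGroup.lift_apply_of]
    rfl
  rw [h2, mul_one, List.map_ofFn, List.ofFn_succ, List.prod_cons]
  have hhead : ((⇑η ∘ fun j : Fin (g' + 1) =>
      (⁅(FreeGroup.of (Sum.inl ⟨2 * (j : ℕ), by have := j.isLt; omega⟩) :
          FreeGroup (Fin (2 * (g' + 1)) ⊕ Fin r)),
        FreeGroup.of (Sum.inl ⟨2 * (j : ℕ) + 1, by have := j.isLt; omega⟩)⁆)) 0) = heisZ := by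
    rw [Function.comp_apply, map_commutatorElement, hη, FreeGroup.lift_apply_of, FreeGroup.lift_apply_of]
    have h0 : ((0 : Fin (g' + 1)) : ℕ) = 0 := rfl
    simp only [heisGen, h0]
    norm_num
    exact heis_commXY
  rw [hhead]
  have htail : (List.ofFn fun i : Fin g' => (⇑η ∘ fun j : Fin (g' + 1) =>
      (⁅(FreeGroup.of (Sum.inl ⟨2 * (j : ℕ), by have := j.isLt; omega⟩) :
          FreeGroup (Fin (2 * (g' + 1)) ⊕ Fin r)),
        FreeGroup.of (Sum.inl ⟨2 * (j : ℕ) + 1, by have := j.isLt; omega⟩)⁆)) i.succ).prod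
      = 1 := by
    apply List.prod_eq_one
    intro x hx
    obtain ⟨j, rfl⟩ := List.mem_ofFn.mp hx
    simp only [Function.comp_apply]
    rw [map_commutatorElement, hη, FreeGroup.lift_apply_of, FreeGroup.lift_apply_of]
    have hv : ((j.succ : Fin (g' + 1)) : ℕ) = (j : ℕ) + 1 := Fin.val_succ j
    have hne0 : ¬(2 * ((j.succ : Fin (g' + 1)) : ℕ) = 0) := by omega
    have hne1 : ¬(2 * ((j.succ : Fin (g' + 1)) : ℕ) = 1) := by omega
    have hne0' : ¬(2 * ((j.succ : Fin (g' + 1)) : ℕ) + 1 = 0) := by omega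
    have hne1' : ¬(2 * ((j.succ : Fin (g' + 1)) : ℕ) + 1 = 1) := by omega
    simp only [heisGen, hne0, hne1, hne0', hne1', if_false]
    simp [commutatorElement_def]
  rw [htail, mul_one]

end Heis

section InfOrder

open Monoid Monoid.CoprodI

variable {ι : Type*} {M : ι → Type*} [∀ i, Group (M i)]

theorem coprodI_listprod_pow_ne_one (L : List (Σ i, M i)) (hL : L ≠ [])
    (h1 : ∀ l ∈ L, Sigma.snd l ≠ 1)
    (hchain : L.Chain' fun l l' => Sigma.fst l ≠ Sigma.fst l')
    (hcyc : ∀ x ∈ L.getLast?, ∀ y ∈ L.head?, Sigma.fst (α := ι) x ≠ Sigma.fst y)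
    (n : ℕ) (hn : n ≠ 0) :
    ((L.map fun l => (CoprodI.of l.snd : CoprodI M)).prod) ^ n ≠ 1 := by
  classical
  obtain ⟨a, L', rfl⟩ := List.exists_cons_of_ne_nil hL
  set L := a :: L' with hLdef
  -- head of any nonzero flatten of replicates
  have hhead : ∀ m : ℕ, m ≠ 0 → ((List.replicate m L).flatten).head? = some a := by
    intro m hm
    obtain ⟨m', rfl⟩ : ∃ m', m = m' + 1 := ⟨m - 1, by omega⟩
    rw [List.replicate_succ, List.flatten_cons]
    rfl
  -- chain property of flattened replicates
  have hchainflat : ∀ m : ℕ,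
      ((List.replicate m L).flatten).Chain' fun l l' => Sigma.fst l ≠ Sigma.fst l' := by
    intro m
    induction m with
    | zero => exact List.isChain_nil
    | succ m ih =>
      rw [List.replicate_succ, List.flatten_cons]
      rw [show ∀ R (l : List ((i : ι) × M i)), List.Chain' R l = List.IsChain R l from
        fun _ _ => rfl, List.isChain_append]
      refine ⟨hchain, ih, ?_⟩
      intro x hx y hy
      rcases Nat.eq_zero_or_pos m with hm | hm
      · subst hm
        simp at hy
      · rw [hhead m (by omega)] at hy
        simp only [Option.mem_def, Option.some.injEq] at hy
        subst hy
        exact hcyc x hx a rfl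
  -- the word
  set w : Word M := ⟨(List.replicate n L).flatten, by
      intro l hl
      rw [List.mem_flatten] at hl
      obtain ⟨l', hl', hll⟩ := hl
      rw [List.eq_of_mem_replicate hl'] at hll
      exact h1 l hll, hchainflat n⟩ with hw
  -- its product
  have hprod : ∀ m : ℕ, (((List.replicate m L).flatten).map
      (fun l => (CoprodI.of l.snd : CoprodI M))).prod
      = ((L.map fun l => (CoprodI.of l.snd : CoprodI M)).prod) ^ m := by
    intro m
    induction m with
    | zero => simp
    | succ m ih =>
      rw [List.replicate_succ, List.flatten_cons, List.map_append, List.prod_append, ih,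
        pow_succ']
  intro hone
  have hwprod : Word.prod w = 1 := by
    rw [hw]
    show (((List.replicate n L).flatten).map fun l => (CoprodI.of l.snd : CoprodI M)).prod = 1
    rw [hprod n, hone]
  have hwempty : w = Word.empty := by
    have hinj : Function.Injective (Word.prod : Word M → CoprodI M) := by
      intro w1 w2 h12
      have r1 : (Word.equiv (M := M)) (Word.prod w1) = w1 := (Word.equiv (M := M)).right_inv w1
      have r2 : (Word.equiv (M := M)) (Word.prod w2) = w2 := (Word.equiv (M := M)).right_inv w2
      rw [← r1, ← r2, h12]
    apply hinj
    rw [hwprod, Word.prod_empty]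
  have : ((List.replicate n L).flatten).length = 0 := by
    rw [show (List.replicate n L).flatten = w.toList from rfl, hwempty]
    rfl
  rw [List.length_flatten] at this
  simp only [List.map_replicate, List.sum_replicate, smul_eq_mul] at this
  have : n * L.length = 0 := this
  have hLlen : L.length ≠ 0 := by
    rw [hLdef]
    simp
  exact absurd this (by positivity)

theorem coprodI_listprod_zpow_eq_one (L : List (Σ i, M i)) (hL : L ≠ [])
    (h1 : ∀ l ∈ L, Sigma.snd l ≠ 1)
    (hchain : L.Chain' fun l l' => Sigma.fst l ≠ Sigma.fst l')
    (hcyc : ∀ x ∈ L.getLast?, ∀ y ∈ L.head?, Sigma.fst (α := ι) x ≠ Sigma.fst y)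
    (m : ℤ) (hm : ((L.map fun l => (CoprodI.of l.snd : CoprodI M)).prod) ^ m = 1) :
    m = 0 := by
  by_contra hm0
  set c := (L.map fun l => (CoprodI.of l.snd : CoprodI M)).prod with hc
  have : c ^ (m.natAbs) = 1 := by
    rcases Int.natAbs_eq m with h | h
    · rw [← zpow_natCast, ← h, hm]
    · rw [← zpow_natCast, ← neg_neg ((m.natAbs : ℤ)), ← h, zpow_neg, hm, inv_one]
  exact coprodI_listprod_pow_ne_one L hL h1 hchain hcyc m.natAbs (by omega) this

end InfOrder

section GenusZero

open Monoid Monoid.CoprodI Monoid.PushoutI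

variable {ι : Type*} {M : ι → Type*} [∀ i, Group (M i)]

theorem coprodI_distinct_zpow_eq_one (L : List (Σ i, M i)) (hlen : 2 ≤ L.length)
    (h1 : ∀ l ∈ L, Sigma.snd l ≠ 1)
    (hpw : L.Pairwise fun l l' => Sigma.fst l ≠ Sigma.fst l')
    (m : ℤ) (hm : ((L.map fun l => (CoprodI.of l.snd : CoprodI M)).prod) ^ m = 1) : m = 0 := by
  match L, hlen, h1, hpw, hm with
  | a :: b :: L₃, _, h1, hpw, hm =>
    apply coprodI_listprod_zpow_eq_one _ (List.cons_ne_nil a _) h1 hpw.isChain _ m hm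
    intro x hx y hy
    have hy' : y = a := by
      simp only [List.head?_cons, Option.mem_def, Option.some.injEq] at hy
      exact hy.symm
    subst hy'
    rw [List.getLast?_cons_cons] at hx
    obtain ⟨hne, hxl⟩ := List.mem_getLast?_eq_getLast hx
    have hxmem : x ∈ b :: L₃ := by
      rw [hxl]
      exact List.getLast_mem hne
    rcases hpw with _ | ⟨hpa, _⟩
    exact fun h => (hpa x hxmem) h.symm

section Construction

variable (k : ℕ) (p : Fin (2 + k) → ℕ)

/-- the cyclic groups of the first two cone points -/
abbrev ZA : Fin 2 → Type := fun i => Multiplicative (ZMod (p (Fin.castAdd k i)))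

/-- the cyclic groups of the remaining cone points -/
abbrev ZB : Fin k → Type := fun j => Multiplicative (ZMod (p (Fin.natAdd 2 j)))

/-- generators -/
def gA (i : Fin 2) : ZA k p i := Multiplicative.ofAdd (1 : ZMod (p (Fin.castAdd k i)))

def gB (j : Fin k) : ZB k p j := Multiplicative.ofAdd (1 : ZMod (p (Fin.natAdd 2 j)))

variable {k p}

theorem gA_ne_one (hp : ∀ i, 2 ≤ p i) (i : Fin 2) : gA k p i ≠ 1 := by
  haveI : Fact (1 < p (Fin.castAdd k i)) := ⟨hp _⟩
  intro h
  rw [gA] at h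
  have h0 : (1 : ZMod (p (Fin.castAdd k i))) = 0 := by
    have := Multiplicative.ofAdd.injective (h.trans (ofAdd_zero).symm)
    exact this
  exact one_ne_zero h0

theorem gB_ne_one (hp : ∀ i, 2 ≤ p i) (j : Fin k) : gB k p j ≠ 1 := by
  haveI : Fact (1 < p (Fin.natAdd 2 j)) := ⟨hp _⟩
  intro h
  rw [gB] at h
  have h0 : (1 : ZMod (p (Fin.natAdd 2 j))) = 0 := by
    have := Multiplicative.ofAdd.injective (h.trans (ofAdd_zero).symm)
    exact this
  exact one_ne_zero h0

theorem gA_pow (i : Fin 2) : gA k p i ^ (p (Fin.castAdd k i)) = 1 := by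
  rw [gA, ← ofAdd_nsmul, nsmul_eq_mul, mul_one, ZMod.natCast_self, ofAdd_zero]

theorem gB_pow (j : Fin k) : gB k p j ^ (p (Fin.natAdd 2 j)) = 1 := by
  rw [gB, ← ofAdd_nsmul, nsmul_eq_mul, mul_one, ZMod.natCast_self, ofAdd_zero]

variable (k p)

/-- the boundary elements -/
def cA : CoprodI (ZA k p) := CoprodI.of (gA k p 0) * CoprodI.of (gA k p 1)

def cB : CoprodI (ZB k p) := (List.ofFn fun j : Fin k => CoprodI.of (gB k p j)).prod

variable {k p}

theorem cA_zpow (hp : ∀ i, 2 ≤ p i) (m : ℤ) (hm : cA k p ^ m = 1) : m = 0 := by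
  have hL : cA k p = ((([⟨0, gA k p 0⟩, ⟨1, gA k p 1⟩] : List (Σ i, ZA k p i)).map
      fun l => (CoprodI.of l.snd : CoprodI (ZA k p))).prod) := by
    simp [cA]
  rw [hL] at hm
  refine coprodI_distinct_zpow_eq_one _ (by simp) ?_ ?_ m hm
  · intro l hl
    simp only [List.mem_cons, List.not_mem_nil, or_false] at hl
    rcases hl with h | h
    · subst h; exact gA_ne_one hp 0
    · subst h; exact gA_ne_one hp 1
  · refine List.pairwise_cons.mpr ⟨?_, ?_⟩
    · intro l hl
      simp only [List.mem_cons, List.not_mem_nil, or_false] at hl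
      subst hl
      exact (by decide : (0 : Fin 2) ≠ 1)
    · simp

theorem cB_zpow (hp : ∀ i, 2 ≤ p i) (hk : 2 ≤ k) (m : ℤ) (hm : cB k p ^ m = 1) : m = 0 := by
  have hL : cB k p = (((List.ofFn fun j : Fin k => (⟨j, gB k p j⟩ : Σ j, ZB k p j)).map
      fun l => (CoprodI.of l.snd : CoprodI (ZB k p))).prod) := by
    rw [cB, List.map_ofFn]
    rfl
  rw [hL] at hm
  refine coprodI_distinct_zpow_eq_one _ (by simpa using hk) ?_ ?_ m hm
  · intro l hl
    obtain ⟨j, rfl⟩ := List.mem_ofFn.mp hl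
    exact gB_ne_one hp j
  · rw [List.pairwise_ofFn]
    intro i j hij
    exact fun h => absurd (congrArg id h) (by simpa using hij.ne)

end Construction

end GenusZero

section Amalgam

open Monoid Monoid.CoprodI Monoid.PushoutI

variable (k : ℕ) (p : Fin (2 + k) → ℕ)

/-- the two vertex groups -/
abbrev famG : Bool → Type := fun b =>
  match b with
  | true => CoprodI (ZA k p) × Multiplicative ℤ
  | false => CoprodI (ZB k p) × Multiplicative ℤ

instance famG_group : ∀ b, Group (famG k p b) := by
  rintro (_ | _) <;> infer_instance

/-- the edge group inclusions -/
def phiA : Multiplicative (ℤ × ℤ) →* CoprodI (ZA k p) × Multiplicative ℤ :=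
  MonoidHom.mk' (fun h => (cA k p ^ (h.toAdd.1), Multiplicative.ofAdd h.toAdd.2)) (by
    intro x y
    have h1 : (x * y).toAdd = x.toAdd + y.toAdd := rfl
    simp only [h1, Prod.fst_add, Prod.snd_add, ofAdd_add, zpow_add, Prod.mk_mul_mk])

def phiB : Multiplicative (ℤ × ℤ) →* CoprodI (ZB k p) × Multiplicative ℤ :=
  MonoidHom.mk' (fun h => (cB k p ^ (-(h.toAdd.1)), Multiplicative.ofAdd (h.toAdd.1 + h.toAdd.2)))
    (by
      intro x y
      have h1 : (x * y).toAdd = x.toAdd + y.toAdd := rfl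
      simp only [h1, Prod.fst_add, Prod.snd_add, neg_add, zpow_add, Prod.mk_mul_mk,
        ← ofAdd_add]
      congr 1
      ring)

/-- the family of edge maps -/
def phiFam : ∀ b : Bool, Multiplicative (ℤ × ℤ) →* famG k p b := fun b =>
  match b with
  | true => phiA k p
  | false => phiB k p

theorem phiFam_injective (hp : ∀ i, 2 ≤ p i) (hk : 2 ≤ k) :
    ∀ b, Function.Injective (phiFam k p b) := by
  have hA : Function.Injective (phiA k p) := by
    rw [injective_iff_map_eq_one]
    intro h hh
    have h1 : cA k p ^ (h.toAdd.1) = 1 := congrArg Prod.fst hh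
    have h2 : Multiplicative.ofAdd h.toAdd.2 = 1 := congrArg Prod.snd hh
    have hm1 : h.toAdd.1 = 0 := cA_zpow hp _ h1
    have hm2 : h.toAdd.2 = 0 := by
      have := congrArg Multiplicative.toAdd h2
      simpa using this
    have : h.toAdd = 0 := Prod.ext hm1 hm2
    have := congrArg Multiplicative.ofAdd this
    simpa using this
  have hB : Function.Injective (phiB k p) := by
    rw [injective_iff_map_eq_one]
    intro h hh
    have h1 : cB k p ^ (-(h.toAdd.1)) = 1 := congrArg Prod.fst hh
    have h2 : Multiplicative.ofAdd (h.toAdd.1 + h.toAdd.2) = 1 := congrArg Prod.snd hh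
    have hm1 : h.toAdd.1 = 0 := by
      have := cB_zpow hp hk _ h1
      omega
    have hm2 : h.toAdd.2 = 0 := by
      have := congrArg Multiplicative.toAdd h2
      simp only [toAdd_ofAdd, toAdd_one] at this
      omega
    have : h.toAdd = 0 := Prod.ext hm1 hm2
    have := congrArg Multiplicative.ofAdd this
    simpa using this
  rintro (_ | _)
  · exact hB
  · exact hA

/-- the amalgamated product -/
abbrev EE : Type := PushoutI (phiFam k p)

/-- the central element -/
def zz : EE k p := PushoutI.base (phiFam k p) (Multiplicative.ofAdd ((0, 1) : ℤ × ℤ))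

theorem zz_zpow_inj (hp : ∀ i, 2 ≤ p i) (hk : 2 ≤ k) (m : ℤ) (hm : zz k p ^ m = 1) : m = 0 := by
  have h1 : zz k p ^ m = PushoutI.base (phiFam k p)
      (Multiplicative.ofAdd ((0, 1) : ℤ × ℤ) ^ m) := by
    rw [zz, map_zpow]
  have h2 : Multiplicative.ofAdd ((0, 1) : ℤ × ℤ) ^ m = Multiplicative.ofAdd ((0, m) : ℤ × ℤ) := by
    rw [← ofAdd_zsmul]
    congr 1
    simp [Prod.smul_def]
  rw [h1, h2] at hm
  have hinj := PushoutI.base_injective (phiFam_injective k p hp hk)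
  have : Multiplicative.ofAdd ((0, m) : ℤ × ℤ) = 1 := by
    apply hinj
    rw [hm, map_one]
  have := congrArg Multiplicative.toAdd this
  simp only [toAdd_ofAdd, toAdd_one] at this
  exact congrArg Prod.snd this

theorem zz_central : ∀ e : EE k p, Commute (zz k p) e := by
  intro e
  induction e using PushoutI.induction_on with
  | of i g =>
    rcases i with _ | _
    · -- false : B side
      have hz : zz k p = PushoutI.of (φ := phiFam k p) false (phiFam k p false
          (Multiplicative.ofAdd ((0, 1) : ℤ × ℤ))) := (of_apply_eq_base (phiFam k p) false _).symm
      have hval : phiFam k p false (Multiplicative.ofAdd ((0, 1) : ℤ × ℤ))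
          = ((1 : CoprodI (ZB k p)), Multiplicative.ofAdd (1 : ℤ)) := by
        show (cB k p ^ (-(0:ℤ)), Multiplicative.ofAdd ((0:ℤ) + 1)) = _
        rw [neg_zero, zpow_zero, zero_add]
      rw [hz, hval]
      obtain ⟨gb, gz⟩ := g
      have hcomm : Commute ((1 : CoprodI (ZB k p)), Multiplicative.ofAdd (1 : ℤ)) (gb, gz) := by
        show _ = _
        rw [Prod.mk_mul_mk, Prod.mk_mul_mk, one_mul, mul_one, mul_comm]
      exact hcomm.map (PushoutI.of (φ := phiFam k p) false)
    · -- true : A side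
      have hz : zz k p = PushoutI.of (φ := phiFam k p) true (phiFam k p true
          (Multiplicative.ofAdd ((0, 1) : ℤ × ℤ))) := (of_apply_eq_base (phiFam k p) true _).symm
      have hval : phiFam k p true (Multiplicative.ofAdd ((0, 1) : ℤ × ℤ))
          = ((1 : CoprodI (ZA k p)), Multiplicative.ofAdd (1 : ℤ)) := by
        show (cA k p ^ (0:ℤ), Multiplicative.ofAdd (1:ℤ)) = _
        rw [zpow_zero]
      rw [hz, hval]
      obtain ⟨ga, gz⟩ := g
      have hcomm : Commute ((1 : CoprodI (ZA k p)), Multiplicative.ofAdd (1 : ℤ)) (ga, gz) := by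
        show _ = _
        rw [Prod.mk_mul_mk, Prod.mk_mul_mk, one_mul, mul_one, mul_comm]
      exact hcomm.map (PushoutI.of (φ := phiFam k p) true)
  | base h =>
    have hz : zz k p = PushoutI.base (phiFam k p) (Multiplicative.ofAdd ((0, 1) : ℤ × ℤ)) := rfl
    rw [hz]
    apply Commute.map
    apply Commute.all
  | mul x y hx hy =>
    exact hx.mul_right hy

end Amalgam

section AmalgamEta

open Monoid Monoid.CoprodI Monoid.PushoutI

variable (k : ℕ) (p : Fin (2 + k) → ℕ)

/-- generator images -/
def etaGen : Fin (2 * 0) ⊕ Fin (2 + k) → EE k p := fun x =>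
  match x with
  | Sum.inl a => Fin.elim0 a
  | Sum.inr i => Fin.addCases
      (fun i' => PushoutI.of (φ := phiFam k p) true (CoprodI.of (gA k p i'), 1))
      (fun j => PushoutI.of (φ := phiFam k p) false (CoprodI.of (gB k p j), 1)) i

/-- the homomorphism from the free group -/
def etaG0 : FreeGroup (Fin (2 * 0) ⊕ Fin (2 + k)) →* EE k p := FreeGroup.lift (etaGen k p)

theorem etaGen_pow (i : Fin (2 + k)) : etaGen k p (Sum.inr i) ^ (p i) = 1 := by
  refine Fin.addCases (motive := fun i => etaGen k p (Sum.inr i) ^ (p i) = 1) ?_ ?_ i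
  · intro i'
    have h : etaGen k p (Sum.inr (Fin.castAdd k i')) =
        PushoutI.of (φ := phiFam k p) true (CoprodI.of (gA k p i'), 1) := by
      simp only [etaGen]
      exact Fin.addCases_left i'
    rw [h, ← map_pow, Prod.pow_mk, ← map_pow, gA_pow, one_pow, map_one]
    have h11 : ((1 : CoprodI (ZA k p)), (1 : Multiplicative ℤ)) = 1 := rfl
    rw [h11, map_one]
  · intro j
    have h : etaGen k p (Sum.inr (Fin.natAdd 2 j)) =
        PushoutI.of (φ := phiFam k p) false (CoprodI.of (gB k p j), 1) := by
      simp only [etaGen]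
      exact Fin.addCases_right j
    rw [h, ← map_pow, Prod.pow_mk, ← map_pow, gB_pow, one_pow, map_one]
    have h11 : ((1 : CoprodI (ZB k p)), (1 : Multiplicative ℤ)) = 1 := rfl
    rw [h11, map_one]

theorem etaG0_pow (i : Fin (2 + k)) : etaG0 k p (FreeGroup.of (Sum.inr i)) ^ (p i) = 1 := by
  rw [etaG0, FreeGroup.lift_apply_of]
  exact etaGen_pow k p i

theorem etaG0_rel : etaG0 k p (closedOrbRelator 0 (2 + k)) = zz k p := by
  rw [closedOrbRelator, map_mul]
  rw [List.ofFn_zero, List.prod_nil, map_one, one_mul]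
  rw [map_list_prod, List.map_ofFn]
  have hfn : ((⇑(etaG0 k p)) ∘ fun i : Fin (2 + k) =>
      (FreeGroup.of (Sum.inr i) : FreeGroup (Fin (2 * 0) ⊕ Fin (2 + k)))) =
      fun i : Fin (2 + k) => etaGen k p (Sum.inr i) := by
    funext i
    rw [Function.comp_apply, etaG0, FreeGroup.lift_apply_of]
  rw [hfn, List.ofFn_add, List.prod_append]
  -- left part
  have hleft : (List.ofFn fun i : Fin 2 => etaGen k p (Sum.inr (Fin.castAdd k i))).prod
      = PushoutI.of (φ := phiFam k p) true (cA k p, 1) := by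
    have h0 : ∀ i' : Fin 2, etaGen k p (Sum.inr (Fin.castAdd k i')) =
        PushoutI.of (φ := phiFam k p) true (CoprodI.of (gA k p i'), 1) := by
      intro i'
      simp only [etaGen]
      exact Fin.addCases_left i' 
    have h01 : (Fin.succ 0 : Fin 2) = 1 := rfl
    rw [List.ofFn_succ, List.ofFn_succ, List.ofFn_zero, List.prod_cons, List.prod_cons,
      List.prod_nil, mul_one, h0, h0, h01, ← map_mul, Prod.mk_mul_mk, mul_one, cA]
  -- right part
  have hright : (List.ofFn fun j : Fin k => etaGen k p (Sum.inr (Fin.natAdd 2 j))).prod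
      = PushoutI.of (φ := phiFam k p) false (cB k p, 1) := by
    set hB : CoprodI (ZB k p) →* EE k p :=
      (PushoutI.of (φ := phiFam k p) false).comp (MonoidHom.inl _ _) with hBdef
    have h0 : (fun j : Fin k => etaGen k p (Sum.inr (Fin.natAdd 2 j))) =
        fun j : Fin k => hB (CoprodI.of (gB k p j)) := by
      funext j
      simp only [etaGen]
      exact Fin.addCases_right j
    rw [h0]
    have h1 : (List.ofFn fun j : Fin k => hB (CoprodI.of (gB k p j))) =
        List.map (⇑hB) (List.ofFn fun j : Fin k => CoprodI.of (gB k p j)) := by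
      rw [List.map_ofFn]
      rfl
    rw [h1, ← map_list_prod]
    rfl
  rw [show (fun i : Fin 2 => etaGen k p (Sum.inr (Fin.castLE (by omega) i))) =
      fun i => etaGen k p (Sum.inr (Fin.castAdd k i)) from rfl, hleft, hright]
  -- shear computation
  have hvalA : phiFam k p true (Multiplicative.ofAdd ((1, 0) : ℤ × ℤ)) = (cA k p, 1) := by
    show (cA k p ^ (1 : ℤ), Multiplicative.ofAdd (0 : ℤ)) = _
    rw [zpow_one, ofAdd_zero]
  have hA : PushoutI.of (φ := phiFam k p) true (cA k p, 1) =
      PushoutI.base (phiFam k p) (Multiplicative.ofAdd ((1, 0) : ℤ × ℤ)) := by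
    rw [← hvalA, of_apply_eq_base]
  have hvalB : phiFam k p false (Multiplicative.ofAdd ((1, 0) : ℤ × ℤ)) =
      ((cB k p)⁻¹, Multiplicative.ofAdd (1 : ℤ)) := by
    show (cB k p ^ (-(1 : ℤ)), Multiplicative.ofAdd ((1 : ℤ) + 0)) = _
    rw [zpow_neg, zpow_one, add_zero]
  have hB2 : PushoutI.base (phiFam k p) (Multiplicative.ofAdd ((1, 0) : ℤ × ℤ)) =
      PushoutI.of (φ := phiFam k p) false ((cB k p)⁻¹, Multiplicative.ofAdd (1 : ℤ)) := by
    rw [← hvalB, of_apply_eq_base]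
  rw [hA, hB2, ← map_mul, Prod.mk_mul_mk, inv_mul_cancel, mul_one]
  have hlast : ((1 : CoprodI (ZB k p)), Multiplicative.ofAdd (1 : ℤ)) =
      phiFam k p false (Multiplicative.ofAdd ((0, 1) : ℤ × ℤ)) := by
    show _ = (cB k p ^ (-(0 : ℤ)), Multiplicative.ofAdd ((0 : ℤ) + 1))
    rw [neg_zero, zpow_zero, zero_add]
  rw [hlast, of_apply_eq_base]
  rfl

end AmalgamEta

section Cases

theorem g1_isEmpty (g r : ℕ) (hg : 1 ≤ g) (p : Fin r → ℕ) (hp : ∀ i, 2 ≤ p i)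
    (κ : Type u) (D : κ → Type v) [∀ x, Group (D x)]
    (hcyc : ∀ x, ∃ d : D x, Subgroup.zpowers d = ⊤) :
    IsEmpty (PresentedGroup (closedOrbRels g r p) ≃* Monoid.CoprodI D) := by
  apply no_iso g r p hp (FreeGroup.lift (heisGen g r)) heisZ heisZ_comm heisZ_inf _
    (heis_rel g r hg) κ D hcyc
  intro i
  rw [FreeGroup.lift_apply_of]
  show (1 : Heis) ^ p i = 1
  rw [one_pow]

theorem g0_isEmpty (k : ℕ) (hk : 2 ≤ k) (p : Fin (2 + k) → ℕ) (hp : ∀ i, 2 ≤ p i)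
    (κ : Type u) (D : κ → Type v) [∀ x, Group (D x)]
    (hcyc : ∀ x, ∃ d : D x, Subgroup.zpowers d = ⊤) :
    IsEmpty (PresentedGroup (closedOrbRels 0 (2 + k) p) ≃* Monoid.CoprodI D) :=
  no_iso 0 (2 + k) p hp (etaG0 k p) (zz k p) (zz_central k p) (zz_zpow_inj k p hp hk)
    (etaG0_pow k p) (etaG0_rel k p) κ D hcyc

end Cases

end OrbifoldAux

/-- The fundamental group
`⟨a₁,…,a_{2g}, s₁,…,s_r ∣ s₁^{p₁},…,s_r^{p_r}, [a₁,a₂]⋯[a_{2g−1},a_{2g}]·s₁⋯s_r⟩` of a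
sufficiently large closed orientable 2-orbifold (`g ≥ 1` or `r ≥ 4`, cone orders
`p_i ≥ 2`) is not isomorphic to any free product of a family of cyclic groups. -/
theorem closed_orbifold_group_not_free_product_of_cyclics
    (g r : ℕ) (p : Fin r → ℕ) (hp : ∀ i, 2 ≤ p i) (hlarge : 1 ≤ g ∨ 4 ≤ r)
    (κ : Type u) (D : κ → Type v) [∀ k, Group (D k)]
    (hcyc : ∀ k, ∃ d : D k, Subgroup.zpowers d = ⊤) :
    IsEmpty (PresentedGroup (closedOrbRels g r p) ≃* Monoid.CoprodI D) := by
  by_cases hg : 1 ≤ g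
  · exact OrbifoldAux.g1_isEmpty g r hg p hp κ D hcyc
  · have hg0 : g = 0 := by omega
    have hr : 4 ≤ r := by
      rcases hlarge with h | h
      · omega
      · exact h
    subst hg0
    obtain ⟨k, rfl⟩ : ∃ k, r = 2 + k := ⟨r - 2, by omega⟩
    exact OrbifoldAux.g0_isEmpty k (by omega) p hp κ D hcyc
end

section
/- Let g ≥ 0, r ≥ 0 and p₁,…,p_r ≥ 2 be integers with g ≥ 1 or r ≥ 4, and let G = ⟨a₁,…,a_{2g}, s₁,…,s_r | s₁^{p₁},…,s_r^{p_r}, [a₁,a₂]⋯[a_{2g−1},a_{2g}]·s₁⋯s_r⟩ be the fundamental group of a sufficiently large closed orientable 2-orbifold of genus g with cone points of orders p₁,…,p_r. Then for each 1 ≤ i ≤ r, the image of s_i in G has order exactly p_i. -/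
open scoped commutatorElement

noncomputable section

abbrev Mx : Type := Matrix (Fin 2) (Fin 2) ℂ
abbrev GLC : Type := Mxˣ

lemma sq_fin_two (x y z w : ℂ) :
    !![x, y; z, w] ^ 2 = (x + w) • !![x, y; z, w] - (x * w - y * z) • (1 : Mx) := by
  rw [pow_two, Matrix.mul_fin_two, Matrix.one_fin_two]
  ext i j
  fin_cases i <;> fin_cases j <;> simp <;> ring

lemma pow_diag_fin_two (x y : ℂ) (k : ℕ) :
    !![x, 0; 0, y] ^ k = !![x ^ k, 0; 0, y ^ k] := by
  induction k with
  | zero => simp [Matrix.one_fin_two]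
  | succ k ih => rw [pow_succ, ih, Matrix.mul_fin_two]; simp [pow_succ]

def sclHom : ℂˣ →* GLC where
  toFun c := ⟨(c : ℂ) • 1, ((c⁻¹ : ℂˣ) : ℂ) • 1,
    by rw [smul_mul_assoc, one_mul, smul_smul, ← Units.val_mul, mul_inv_cancel, Units.val_one, one_smul],
    by rw [smul_mul_assoc, one_mul, smul_smul, ← Units.val_mul, inv_mul_cancel, Units.val_one, one_smul]⟩
  map_one' := by ext : 1; simp
  map_mul' c d := by ext : 1; simp [smul_smul, smul_mul_assoc, mul_comm]

lemma sclHom_val (c : ℂˣ) : ((sclHom c : GLC) : Mx) = (c : ℂ) • 1 := rfl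

def sclSub : Subgroup GLC := sclHom.range

instance : sclSub.Normal := by
  constructor
  rintro x ⟨c, rfl⟩ g
  refine ⟨c, ?_⟩
  ext : 1
  rw [Units.val_mul, Units.val_mul, sclHom_val, mul_smul_comm, mul_one, smul_mul_assoc,
    ← Units.val_mul, mul_inv_cancel, Units.val_one]

lemma exists_core (p q u : ℕ) (hp : 2 ≤ p) (hq : 2 ≤ q) (hu : 2 ≤ u) :
    ∃ y z : GLC ⧸ sclSub, y ^ q = 1 ∧ z ^ u = 1 ∧ orderOf (y * z) = p := by
  have hζ : IsPrimitiveRoot (Complex.exp (2 * Real.pi * Complex.I / p)) p :=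
    Complex.isPrimitiveRoot_exp p (by omega)
  have hβ : IsPrimitiveRoot (Complex.exp (2 * Real.pi * Complex.I / q)) q :=
    Complex.isPrimitiveRoot_exp q (by omega)
  have hγ : IsPrimitiveRoot (Complex.exp (2 * Real.pi * Complex.I / u)) u :=
    Complex.isPrimitiveRoot_exp u (by omega)
  set ζ := Complex.exp (2 * Real.pi * Complex.I / p)
  set β := Complex.exp (2 * Real.pi * Complex.I / q)
  set γ := Complex.exp (2 * Real.pi * Complex.I / u)
  have hζ1 : ζ ≠ 1 := hζ.ne_one (by omega)
  have hβ1 : β ≠ 1 := hβ.ne_one (by omega)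
  have hγ1 : γ ≠ 1 := hγ.ne_one (by omega)
  have hζ0 : ζ ≠ 0 := Complex.exp_ne_zero _
  have hβ0 : β ≠ 0 := Complex.exp_ne_zero _
  have hγ0 : γ ≠ 0 := Complex.exp_ne_zero _
  obtain ⟨a, ha⟩ := IsAlgClosed.exists_pow_nat_eq (k := ℂ) (β * γ * ζ⁻¹) (n := 2) (by norm_num)
  have hrhs0 : β * γ * ζ⁻¹ ≠ 0 := mul_ne_zero (mul_ne_zero hβ0 hγ0) (inv_ne_zero hζ0)
  have ha0 : a ≠ 0 := by
    rintro rfl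
    rw [zero_pow (by norm_num)] at ha
    exact hrhs0 ha.symm
  set x : ℂ := (a * (1 + ζ) - β * (1 + γ)) / (1 - β) with hxdef
  set w : ℂ := 1 + γ - x with hwdef
  set yv : ℂ := x * w - γ with hyvdef
  have hβ1' : (1 : ℂ) - β ≠ 0 := sub_ne_zero.mpr (Ne.symm hβ1)
  have htr : x + β * w = a * (1 + ζ) := by
    rw [hwdef, hxdef]; field_simp; ring
  set Zm : Mx := !![x, yv; 1, w] with hZm
  set Ym : Mx := !![1, 0; 0, β] with hYm
  set Tm : Mx := !![x, yv; β, β * w] with hTm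
  have hYZ : Ym * Zm = Tm := by
    rw [hYm, hZm, Matrix.mul_fin_two, hTm]; norm_num
  -- Z relations
  have hZsq : Zm ^ 2 = (1 + γ) • Zm - γ • (1 : Mx) := by
    rw [hZm, sq_fin_two]
    have h1 : x + w = 1 + γ := by rw [hwdef]; ring
    have h2 : x * w - yv * 1 = γ := by rw [hyvdef]; ring
    rw [h1, h2]
  have hZpow : ∀ k : ℕ, (γ - 1) • Zm ^ k = (γ ^ k - 1) • Zm + (γ - γ ^ k) • (1 : Mx) := by
    intro k
    induction k with
    | zero => simp
    | succ k ih =>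
      have hstep : (γ - 1) • Zm ^ (k + 1) = ((γ - 1) • Zm ^ k) * Zm := by
        rw [smul_mul_assoc, ← pow_succ]
      rw [hstep, ih, add_mul, smul_mul_assoc, smul_mul_assoc, one_mul, ← sq, hZsq]
      match_scalars <;> ring
  have hZu : Zm ^ u = 1 := by
    have h := hZpow u
    rw [hγ.pow_eq_one] at h
    have hne : γ - 1 ≠ 0 := sub_ne_zero.mpr hγ1
    refine smul_right_injective Mx hne ?_
    show (γ - 1) • Zm ^ u = (γ - 1) • (1 : Mx)
    rw [h]; match_scalars <;> ring
  -- T relations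
  have hdet : x * (β * w) - yv * β = a ^ 2 * ζ := by
    have h2 : x * w - yv = γ := by rw [hyvdef]; ring
    have : x * (β * w) - yv * β = β * (x * w - yv) := by ring
    rw [this, h2, ha]
    field_simp
  have hTsq : Tm ^ 2 = (a * (1 + ζ)) • Tm - (a ^ 2 * ζ) • (1 : Mx) := by
    rw [hTm, sq_fin_two, ← hTm]
    have h1 : x + β * w = a * (1 + ζ) := htr
    rw [h1, hdet]
  have hTpow : ∀ k : ℕ, (ζ - 1) • Tm ^ (k + 1)
      = (a ^ k * (ζ ^ (k + 1) - 1)) • Tm + (a ^ (k + 1) * (ζ - ζ ^ (k + 1))) • (1 : Mx) := by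
    intro k
    induction k with
    | zero =>
      norm_num
    | succ k ih =>
      have hstep : (ζ - 1) • Tm ^ (k + 2) = ((ζ - 1) • Tm ^ (k + 1)) * Tm := by
        rw [smul_mul_assoc, ← pow_succ]
      rw [hstep, ih, add_mul, smul_mul_assoc, smul_mul_assoc, one_mul, ← sq, hTsq]
      match_scalars <;> ring
  have hTp : Tm ^ p = (a ^ p) • (1 : Mx) := by
    obtain ⟨p', rfl⟩ : ∃ p', p = p' + 1 := ⟨p - 1, by omega⟩
    have h := hTpow p'
    rw [hζ.pow_eq_one] at h
    have hne : ζ - 1 ≠ 0 := sub_ne_zero.mpr hζ1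
    refine smul_right_injective Mx hne ?_
    show (ζ - 1) • Tm ^ (p' + 1) = (ζ - 1) • ((a ^ (p' + 1)) • (1 : Mx))
    rw [h]; match_scalars <;> ring
  have hTscalar : ∀ c : ℂ, Tm ≠ c • (1 : Mx) := by
    intro c hc
    have h10 := congrFun (congrFun hc 1) 0
    rw [hTm] at h10
    simp [Matrix.one_apply] at h10
    exact hβ0 h10
  have hTdvd : ∀ (k : ℕ) (c : ℂ), Tm ^ k = c • (1 : Mx) → p ∣ k := by
    intro k
    match k with
    | 0 => exact fun c _ => dvd_zero p
    | k + 1 =>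
      intro c hk
      have h := hTpow k
      rw [hk] at h
      by_contra hnd
      have hζk : ζ ^ (k + 1) ≠ 1 := fun h1 => hnd ((hζ.pow_eq_one_iff_dvd _).mp h1)
      have hco : a ^ k * (ζ ^ (k + 1) - 1) ≠ 0 :=
        mul_ne_zero (pow_ne_zero _ ha0) (sub_ne_zero.mpr hζk)
      apply hTscalar ((((ζ - 1) * c) - a ^ (k + 1) * (ζ - ζ ^ (k + 1))) / (a ^ k * (ζ ^ (k + 1) - 1)))
      have hT : (a ^ k * (ζ ^ (k + 1) - 1)) • Tm
          = (((ζ - 1) * c) - a ^ (k + 1) * (ζ - ζ ^ (k + 1))) • (1 : Mx) := by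
        calc (a ^ k * (ζ ^ (k + 1) - 1)) • Tm
            = (ζ - 1) • (c • (1 : Mx)) - (a ^ (k + 1) * (ζ - ζ ^ (k + 1))) • (1 : Mx) :=
              eq_sub_of_add_eq h.symm
          _ = _ := by match_scalars <;> ring
      calc Tm = (a ^ k * (ζ ^ (k + 1) - 1))⁻¹ • ((a ^ k * (ζ ^ (k + 1) - 1)) • Tm) :=
            (inv_smul_smul₀ hco _).symm
        _ = _ := by rw [hT, smul_smul, div_eq_inv_mul]
  -- units
  have hYinv : Ym * !![1, 0; 0, β⁻¹] = 1 ∧ !![1, 0; 0, β⁻¹] * Ym = 1 := by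
    constructor <;>
      (rw [hYm, Matrix.mul_fin_two, Matrix.one_fin_two]
       norm_num [mul_inv_cancel₀ hβ0, inv_mul_cancel₀ hβ0])
  set Yu : GLC := ⟨Ym, !![1, 0; 0, β⁻¹], hYinv.1, hYinv.2⟩ with hYu
  have humm : u - 1 + 1 = u := by omega
  have hZinv1 : Zm * Zm ^ (u - 1) = 1 := by
    rw [← pow_succ', humm, hZu]
  have hZinv2 : Zm ^ (u - 1) * Zm = 1 := by
    rw [← pow_succ, humm, hZu]
  set Zu : GLC := ⟨Zm, Zm ^ (u - 1), hZinv1, hZinv2⟩ with hZu'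
  set Tu : GLC := Yu * Zu with hTu
  have hTuval : (Tu : Mx) = Tm := by rw [hTu, Units.val_mul]; exact hYZ
  have hYuq : Yu ^ q = 1 := by
    ext : 1
    rw [Units.val_pow_eq_pow_val, Units.val_one]
    show Ym ^ q = 1
    rw [hYm, pow_diag_fin_two, one_pow, hβ.pow_eq_one, Matrix.one_fin_two]
  have hZuu : Zu ^ u = 1 := by
    ext : 1
    rw [Units.val_pow_eq_pow_val, Units.val_one]
    exact hZu
  refine ⟨QuotientGroup.mk' sclSub Yu, QuotientGroup.mk' sclSub Zu, ?_, ?_, ?_⟩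
  · rw [← map_pow, hYuq, map_one]
  · rw [← map_pow, hZuu, map_one]
  · have hmul : QuotientGroup.mk' sclSub Yu * QuotientGroup.mk' sclSub Zu
        = QuotientGroup.mk' sclSub Tu := by rw [← map_mul]
    rw [hmul]
    refine Nat.dvd_antisymm (orderOf_dvd_of_pow_eq_one ?_) ?_
    · rw [← map_pow, QuotientGroup.mk'_apply, QuotientGroup.eq_one_iff]
      refine ⟨Units.mk0 (a ^ p) (pow_ne_zero _ ha0), ?_⟩
      ext : 1
      rw [sclHom_val, Units.val_pow_eq_pow_val, hTuval, hTp]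
      rfl
    · have hd := pow_orderOf_eq_one (QuotientGroup.mk' sclSub Tu)
      rw [← map_pow, QuotientGroup.mk'_apply, QuotientGroup.eq_one_iff] at hd
      obtain ⟨c, hc⟩ := hd
      have hval : Tm ^ orderOf (QuotientGroup.mk' sclSub Tu) = (c : ℂ) • (1 : Mx) := by
        rw [← hTuval, ← Units.val_pow_eq_pow_val, ← hc, sclHom_val]
      exact hTdvd _ _ hval

lemma exists_caseA (p : ℕ) (hp : 2 ≤ p) :
    ∃ A B S : GLC, ⁅A, B⁆ * S = 1 ∧ S ^ p = 1 ∧ orderOf S = p := by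
  have hζ : IsPrimitiveRoot (Complex.exp (2 * Real.pi * Complex.I / p)) p :=
    Complex.isPrimitiveRoot_exp p (by omega)
  set ζ := Complex.exp (2 * Real.pi * Complex.I / p)
  have hζ0 : ζ ≠ 0 := Complex.exp_ne_zero _
  have h1 : !![ζ, 0; 0, (1:ℂ)] * !![ζ⁻¹, 0; 0, 1] = 1 := by
    rw [Matrix.mul_fin_two, Matrix.one_fin_two]
    norm_num [mul_inv_cancel₀ hζ0]
  have h2 : !![ζ⁻¹, 0; 0, (1:ℂ)] * !![ζ, 0; 0, 1] = 1 := by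
    rw [Matrix.mul_fin_two, Matrix.one_fin_two]
    norm_num [inv_mul_cancel₀ hζ0]
  have h3 : !![(0:ℂ), 1; 1, 0] * !![(0:ℂ), 1; 1, 0] = 1 := by
    rw [Matrix.mul_fin_two, Matrix.one_fin_two]; norm_num
  have h4 : !![ζ⁻¹, 0; 0, ζ] * !![ζ, 0; 0, ζ⁻¹] = 1 := by
    rw [Matrix.mul_fin_two, Matrix.one_fin_two]
    norm_num [mul_inv_cancel₀ hζ0, inv_mul_cancel₀ hζ0]
  have h5 : !![ζ, 0; 0, ζ⁻¹] * !![ζ⁻¹, 0; 0, ζ] = 1 := by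
    rw [Matrix.mul_fin_two, Matrix.one_fin_two]
    norm_num [mul_inv_cancel₀ hζ0, inv_mul_cancel₀ hζ0]
  refine ⟨⟨!![ζ, 0; 0, 1], !![ζ⁻¹, 0; 0, 1], h1, h2⟩,
          ⟨!![0, 1; 1, 0], !![0, 1; 1, 0], h3, h3⟩,
          ⟨!![ζ⁻¹, 0; 0, ζ], !![ζ, 0; 0, ζ⁻¹], h4, h5⟩, ?_, ?_, ?_⟩
  · ext : 1
    rw [commutatorElement_def]
    rw [Units.val_mul, Units.val_mul, Units.val_mul, Units.val_mul, Units.inv_mk, Units.inv_mk]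
    show !![ζ, 0; 0, (1:ℂ)] * !![0, 1; 1, 0] * !![ζ⁻¹, 0; 0, 1] * !![0, 1; 1, 0]
        * !![ζ⁻¹, 0; 0, ζ] = (1 : Mx)
    rw [Matrix.mul_fin_two, Matrix.mul_fin_two, Matrix.mul_fin_two, Matrix.mul_fin_two,
      Matrix.one_fin_two]
    norm_num [mul_inv_cancel₀ hζ0, inv_mul_cancel₀ hζ0]
  · ext : 1
    rw [Units.val_pow_eq_pow_val, Units.val_one]
    show !![ζ⁻¹, 0; 0, ζ] ^ p = (1 : Mx)
    rw [pow_diag_fin_two, inv_pow, hζ.pow_eq_one, inv_one, Matrix.one_fin_two]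
  · have hdvd : ∀ k : ℕ, (⟨!![ζ⁻¹, 0; 0, ζ], !![ζ, 0; 0, ζ⁻¹], h4, h5⟩ : GLC) ^ k = 1 → p ∣ k := by
      intro k hk
      have hval : !![ζ⁻¹, 0; 0, ζ] ^ k = (1 : Mx) := by
        have := congrArg Units.val hk
        rwa [Units.val_pow_eq_pow_val, Units.val_one] at this
      rw [pow_diag_fin_two, Matrix.one_fin_two] at hval
      have h11 := congrFun (congrFun hval 1) 1
      simp at h11
      exact (hζ.pow_eq_one_iff_dvd k).mp h11
    refine Nat.dvd_antisymm (orderOf_dvd_of_pow_eq_one ?_) (hdvd _ (pow_orderOf_eq_one _))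
    ext : 1
    rw [Units.val_pow_eq_pow_val, Units.val_one]
    show !![ζ⁻¹, 0; 0, ζ] ^ p = (1 : Mx)
    rw [pow_diag_fin_two, inv_pow, hζ.pow_eq_one, inv_one, Matrix.one_fin_two]

end


variable {G : Type*} [Group G]

lemma prod_ofFn_telescope : ∀ (n : ℕ) (P : ℕ → G) (F : Fin n → G),
    (∀ j : Fin n, F j = (P (j : ℕ))⁻¹ * P ((j : ℕ) + 1)) →
    (List.ofFn F).prod = (P 0)⁻¹ * P n := by
  intro n
  induction n with
  | zero => intro P F h; simp
  | succ n ih =>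
    intro P F h
    rw [List.ofFn_succ', List.concat_eq_append, List.prod_append, List.prod_cons,
      List.prod_nil, mul_one,
      ih P (fun j => F j.castSucc) (fun j => by simpa using h j.castSucc),
      h (Fin.last n)]
    simp [mul_assoc]

lemma prod_ofFn_single {n : ℕ} (F : Fin n → G) (i : ℕ) (hi : i < n)
    (h : ∀ j : Fin n, (j : ℕ) ≠ i → F j = 1) :
    (List.ofFn F).prod = F ⟨i, hi⟩ := by
  have key := prod_ofFn_telescope n (fun m => if m ≤ i then 1 else F ⟨i, hi⟩) F ?_
  · rw [key]
    rw [if_pos (Nat.zero_le i), if_neg (by omega)]; simp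
  · intro j
    beta_reduce
    rcases lt_trichotomy (j : ℕ) i with hj | hj | hj
    · rw [h j (by omega), if_pos (by omega : (j:ℕ) ≤ i), if_pos (by omega : (j:ℕ) + 1 ≤ i)]; simp
    · have hje : j = ⟨i, hi⟩ := Fin.ext hj
      subst hje
      rw [if_pos (by omega : ((⟨i, hi⟩ : Fin n) : ℕ) ≤ i), if_neg (by simp : ¬ ((⟨i, hi⟩ : Fin n) : ℕ) + 1 ≤ i)]
      simp
    · rw [h j (by omega), if_neg (by omega : ¬ (j:ℕ) ≤ i), if_neg (by omega : ¬ (j:ℕ) + 1 ≤ i)]; simp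

lemma orderOf_presented {α : Type*} {rels : Set (FreeGroup α)} {x : α} {n : ℕ}
    (hmem : FreeGroup.of x ^ n ∈ rels) {G : Type*} [Group G] (f : α → G)
    (h : ∀ r ∈ rels, FreeGroup.lift f r = 1) (hord : orderOf (f x) = n) :
    orderOf (PresentedGroup.of (rels := rels) x) = n := by
  refine Nat.dvd_antisymm (orderOf_dvd_of_pow_eq_one ?_) ?_
  · have h1 : PresentedGroup.of (rels := rels) x = QuotientGroup.mk (FreeGroup.of x) := rfl
    rw [h1]
    exact (QuotientGroup.mk_pow (Subgroup.normalClosure rels) (FreeGroup.of x) n).symm.trans ((QuotientGroup.eq_one_iff _).mpr (Subgroup.subset_normalClosure hmem))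
  · rw [← hord, ← PresentedGroup.toGroup.of h (x := x)]
    exact orderOf_map_dvd (PresentedGroup.toGroup h) _

/-- In the fundamental group
`⟨a₁,…,a_{2g}, s₁,…,s_r ∣ s₁^{p₁},…,s_r^{p_r}, [a₁,a₂]⋯[a_{2g−1},a_{2g}]·s₁⋯s_r⟩` of a
sufficiently large closed orientable 2-orbifold (`g ≥ 1` or `r ≥ 4`, cone orders
`p_i ≥ 2`), the image of each generator `s_i` has order exactly `p_i`. -/
theorem orderOf_cone_generator (g r : ℕ) (p : Fin r → ℕ) (hp : ∀ i, 2 ≤ p i)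
    (hlarge : 1 ≤ g ∨ 4 ≤ r) (i : Fin r) :
    orderOf (PresentedGroup.of (rels := closedOrbRels g r p) (Sum.inr i)) = p i := by
  by_cases hg : 1 ≤ g
  · -- Case A : positive genus.  Use a representation into `GL₂(ℂ)`.
    obtain ⟨A, B, S, hABS, hSp, hSord⟩ := exists_caseA (p i) (hp i)
    set f : Fin (2 * g) ⊕ Fin r → GLC :=
      Sum.elim (fun k => if (k : ℕ) = 0 then A else if (k : ℕ) = 1 then B else 1)
        (fun j => if j = i then S else 1) with hf
    have hfi : f (Sum.inr i) = S := by simp [hf]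
    refine orderOf_presented (Or.inl ⟨i, rfl⟩) f ?_ (by rw [hfi]; exact hSord)
    rintro w (⟨j, rfl⟩ | rfl)
    · rw [map_pow, FreeGroup.lift_apply_of]
      by_cases hj : j = i
      · subst hj; simp only [hf, Sum.elim_inr, if_pos rfl]; exact hSp
      · simp only [hf, Sum.elim_inr, if_neg hj, one_pow]
    · rw [closedOrbRelator, map_mul, map_list_prod, map_list_prod, List.map_ofFn,
        List.map_ofFn]
      rw [prod_ofFn_single _ 0 hg ?_, prod_ofFn_single _ (i : ℕ) i.isLt ?_]
      · have e1 : (FreeGroup.lift f)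
            ⁅(FreeGroup.of (Sum.inl ⟨2 * ((⟨0, hg⟩ : Fin g) : ℕ), by omega⟩) :
                FreeGroup (Fin (2 * g) ⊕ Fin r)),
              FreeGroup.of (Sum.inl ⟨2 * ((⟨0, hg⟩ : Fin g) : ℕ) + 1, by omega⟩)⁆ = ⁅A, B⁆ := by
          rw [map_commutatorElement, FreeGroup.lift_apply_of, FreeGroup.lift_apply_of]
          simp only [hf, Sum.elim_inl]
          norm_num
        simp only [Function.comp_apply] at *
        rw [e1]
        have e2 : f (Sum.inr ⟨(i : ℕ), i.isLt⟩) = S := by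
          rw [Fin.eta]; exact hfi
        rw [FreeGroup.lift_apply_of, e2]
        exact hABS
      · intro j hj
        simp only [Function.comp_apply]
        rw [FreeGroup.lift_apply_of]
        simp only [hf, Sum.elim_inr]
        rw [if_neg (fun h => hj (by rw [h]))]
      · intro j hj
        simp only [Function.comp_apply]
        rw [map_commutatorElement, FreeGroup.lift_apply_of, FreeGroup.lift_apply_of]
        simp only [hf, Sum.elim_inl]
        rw [if_neg (show ¬(2 * (j : ℕ) = 0) by omega), if_neg (show ¬(2 * (j : ℕ) = 1) by omega),
          if_neg (show ¬(2 * (j : ℕ) + 1 = 0) by omega),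
          if_neg (show ¬(2 * (j : ℕ) + 1 = 1) by omega)]
        simp [commutatorElement_def]
  · -- Case B : genus 0, at least 4 cone points.  Use a representation into `PGL₂(ℂ)`.
    have hg0 : g = 0 := by omega
    subst hg0
    have hr : 4 ≤ r := hlarge.resolve_left (by omega)
    by_cases h2 : 2 ≤ (i : ℕ)
    · -- the two auxiliary cone points sit just below `i`
      set m : ℕ := (i : ℕ) - 2 with hmdef
      have hm2 : m + 2 = (i : ℕ) := by omega
      have hmr : m < r := by have := i.isLt; omega
      have hm1r : m + 1 < r := by have := i.isLt; omega
      obtain ⟨y, z, hy, hz, ht⟩ :=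
        exists_core (p i) (p ⟨m, hmr⟩) (p ⟨m + 1, hm1r⟩) (hp i) (hp _) (hp _)
      set t := y * z with htdef
      have htp : t ^ p i = 1 := ht ▸ pow_orderOf_eq_one t
      set P : ℕ → GLC ⧸ sclSub :=
        fun n => if n = m + 1 then y else if n = m + 2 then t else 1 with hP
      have hPm : P m = 1 := by simp only [hP]; rw [if_neg (by omega), if_neg (by omega)]
      have hPm1 : P (m + 1) = y := by simp only [hP]; simp
      have hPm2 : P (m + 2) = t := by simp only [hP]; rw [if_neg (by omega)]; simp
      have hPm3 : P (m + 3) = 1 := by simp only [hP]; rw [if_neg (by omega), if_neg (by omega)]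
      set f : Fin (2 * 0) ⊕ Fin r → GLC ⧸ sclSub :=
        Sum.elim (fun _ => 1) (fun j => (P (j : ℕ))⁻¹ * P ((j : ℕ) + 1)) with hf
      have hford : orderOf (f (Sum.inr i)) = p i := by
        have : f (Sum.inr i) = (P (i : ℕ))⁻¹ * P ((i : ℕ) + 1) := rfl
        rw [this, ← hm2, hPm2, show m + 2 + 1 = m + 3 from rfl, hPm3, mul_one, orderOf_inv]
        exact ht
      refine orderOf_presented (Or.inl ⟨i, rfl⟩) f ?_ hford
      rintro w (⟨j, rfl⟩ | rfl)
      · rw [map_pow, FreeGroup.lift_apply_of]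
        show ((P (j : ℕ))⁻¹ * P ((j : ℕ) + 1)) ^ p j = 1
        rcases (by omega : (j : ℕ) = m ∨ (j : ℕ) = m + 1 ∨ (j : ℕ) = m + 2 ∨
            ((j : ℕ) ≠ m ∧ (j : ℕ) ≠ m + 1 ∧ (j : ℕ) ≠ m + 2)) with hj | hj | hj | ⟨h1, h2', h3⟩
        · obtain rfl : j = ⟨m, hmr⟩ := Fin.ext hj
          show ((P m)⁻¹ * P (m + 1)) ^ p ⟨m, hmr⟩ = 1
          rw [hPm, hPm1, inv_one, one_mul]; exact hy
        · obtain rfl : j = ⟨m + 1, hm1r⟩ := Fin.ext hj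
          show ((P (m + 1))⁻¹ * P (m + 1 + 1)) ^ p ⟨m + 1, hm1r⟩ = 1
          rw [hPm1, show m + 1 + 1 = m + 2 from rfl, hPm2, htdef, inv_mul_cancel_left]
          exact hz
        · obtain rfl : j = i := Fin.ext (by omega)
          rw [hj, hPm2, show m + 2 + 1 = m + 3 from rfl, hPm3, mul_one, inv_pow, htp, inv_one]
        · have hPj : P (j : ℕ) = 1 := by
            simp only [hP]; rw [if_neg (by omega), if_neg (by omega)]
          have hPj1 : P ((j : ℕ) + 1) = 1 := by
            simp only [hP]; rw [if_neg (by omega), if_neg (by omega)]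
          rw [hPj, hPj1, inv_one, one_mul, one_pow]
      · rw [closedOrbRelator, map_mul, map_list_prod, map_list_prod, List.map_ofFn,
          List.map_ofFn, List.ofFn_zero, List.prod_nil, one_mul]
        rw [prod_ofFn_telescope r P _ (fun j => by
          simp only [Function.comp_apply]; rw [FreeGroup.lift_apply_of]; rfl)]
        have hP0 : P 0 = 1 := by simp only [hP]; rw [if_neg (by omega), if_neg (by omega)]
        have hPr : P r = 1 := by
          simp only [hP]
          rw [if_neg (by have := i.isLt; omega), if_neg (by have := i.isLt; omega)]
        rw [hP0, hPr, inv_one, one_mul]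
    · -- the two auxiliary cone points sit just above `i`
      have hi3 : (i : ℕ) + 3 ≤ r := by omega
      have hlt1 : (i : ℕ) + 1 < r := by omega
      have hlt2 : (i : ℕ) + 2 < r := by omega
      obtain ⟨y, z, hy, hz, ht⟩ :=
        exists_core (p i) (p ⟨(i : ℕ) + 1, hlt1⟩) (p ⟨(i : ℕ) + 2, hlt2⟩)
          (hp i) (hp _) (hp _)
      set t := y * z with htdef
      have htp : t ^ p i = 1 := ht ▸ pow_orderOf_eq_one t
      set P : ℕ → GLC ⧸ sclSub :=
        fun n => if n = (i : ℕ) + 1 then t⁻¹ else if n = (i : ℕ) + 2 then t⁻¹ * y else 1 with hP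
      have hPi : P (i : ℕ) = 1 := by simp only [hP]; rw [if_neg (by omega), if_neg (by omega)]
      have hPi1 : P ((i : ℕ) + 1) = t⁻¹ := by simp only [hP]; simp
      have hPi2 : P ((i : ℕ) + 2) = t⁻¹ * y := by
        simp only [hP]; rw [if_neg (by omega)]; simp
      have hPi3 : P ((i : ℕ) + 3) = 1 := by
        simp only [hP]; rw [if_neg (by omega), if_neg (by omega)]
      set f : Fin (2 * 0) ⊕ Fin r → GLC ⧸ sclSub :=
        Sum.elim (fun _ => 1) (fun j => (P (j : ℕ))⁻¹ * P ((j : ℕ) + 1)) with hf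
      have hford : orderOf (f (Sum.inr i)) = p i := by
        have : f (Sum.inr i) = (P (i : ℕ))⁻¹ * P ((i : ℕ) + 1) := rfl
        rw [this, hPi, hPi1, inv_one, one_mul, orderOf_inv]
        exact ht
      refine orderOf_presented (Or.inl ⟨i, rfl⟩) f ?_ hford
      rintro w (⟨j, rfl⟩ | rfl)
      · rw [map_pow, FreeGroup.lift_apply_of]
        show ((P (j : ℕ))⁻¹ * P ((j : ℕ) + 1)) ^ p j = 1
        rcases (by omega : (j : ℕ) = (i : ℕ) ∨ (j : ℕ) = (i : ℕ) + 1 ∨ (j : ℕ) = (i : ℕ) + 2 ∨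
            ((j : ℕ) ≠ (i : ℕ) ∧ (j : ℕ) ≠ (i : ℕ) + 1 ∧ (j : ℕ) ≠ (i : ℕ) + 2))
          with hj | hj | hj | ⟨h1, h2', h3⟩
        · obtain rfl : j = i := Fin.ext hj
          rw [hPi, hPi1, inv_one, one_mul, inv_pow, htp, inv_one]
        · obtain rfl : j = ⟨(i : ℕ) + 1, hlt1⟩ := Fin.ext hj
          show ((P ((i : ℕ) + 1))⁻¹ * P ((i : ℕ) + 1 + 1)) ^ p ⟨(i : ℕ) + 1, hlt1⟩ = 1
          rw [hPi1, show (i : ℕ) + 1 + 1 = (i : ℕ) + 2 from rfl, hPi2, inv_inv,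
            mul_inv_cancel_left]
          exact hy
        · obtain rfl : j = ⟨(i : ℕ) + 2, hlt2⟩ := Fin.ext hj
          show ((P ((i : ℕ) + 2))⁻¹ * P ((i : ℕ) + 2 + 1)) ^ p ⟨(i : ℕ) + 2, hlt2⟩ = 1
          rw [show (i : ℕ) + 2 + 1 = (i : ℕ) + 3 from rfl, hPi2, hPi3, mul_one, mul_inv_rev,
            inv_inv, htdef, inv_mul_cancel_left]
          exact hz
        · have hPj : P (j : ℕ) = 1 := by
            simp only [hP]; rw [if_neg (by omega), if_neg (by omega)]
          have hPj1 : P ((j : ℕ) + 1) = 1 := by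
            simp only [hP]; rw [if_neg (by omega), if_neg (by omega)]
          rw [hPj, hPj1, inv_one, one_mul, one_pow]
      · rw [closedOrbRelator, map_mul, map_list_prod, map_list_prod, List.map_ofFn,
          List.map_ofFn, List.ofFn_zero, List.prod_nil, one_mul]
        rw [prod_ofFn_telescope r P _ (fun j => by
          simp only [Function.comp_apply]; rw [FreeGroup.lift_apply_of]; rfl)]
        have hP0 : P 0 = 1 := by simp only [hP]; rw [if_neg (by omega), if_neg (by omega)]
        have hPr : P r = 1 := by simp only [hP]; rw [if_neg (by omega), if_neg (by omega)]
        rw [hP0, hPr, inv_one, one_mul]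
end
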